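/- arXiv:1910.04943 — 3 statements merged into one kernel-verified Lean document; each statement's English description precedes it below -/
import Mathlib

section
/- Under the stated setup, the matrix Riccati initial value problem H'(τ) + H(τ) CᵀΣC H(τ) − (1/γ)( η(T−τ)ᵀC H(τ) + H(τ) Cᵀη(T−τ) ) − ((γ−1)/γ²) η(T−τ)ᵀ Σ^{−1} η(T−τ) = 0 for τ ∈ [0,T], with H(0) = 0, has a unique solution H : [0,T] → ℝ^{N×N}; this solution is symmetric and positive semidefinite for every τ ∈ [0,T], and positive definite for every τ ∈ (0,T]. -/
open Matrix Set

attribute [local instance] Matrix.normedAddCommGroup Matrix.normedSpace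

open Filter
open scoped NNReal Topology

set_option linter.unusedSectionVars false
set_option maxHeartbeats 1000000

namespace RicAux

section A


variable {l m n p : Type*} [Fintype l] [Fintype m] [Fintype n] [Fintype p]

theorem norm_mul_le_card (X : Matrix l m ℝ) (Y : Matrix m n ℝ) :
    ‖X * Y‖ ≤ (Fintype.card m : ℝ) * ‖X‖ * ‖Y‖ := by
  have h0 : (0:ℝ) ≤ (Fintype.card m : ℝ) * ‖X‖ * ‖Y‖ := by positivity
  rw [Matrix.norm_le_iff h0]
  intro i j
  calc ‖(X * Y) i j‖ = |∑ k, X i k * Y k j| := by rfl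
    _ ≤ ∑ k, |X i k * Y k j| := Finset.abs_sum_le_sum_abs _ _
    _ ≤ ∑ _k : m, ‖X‖ * ‖Y‖ := by
        refine Finset.sum_le_sum fun k _ => ?_
        rw [abs_mul]
        exact mul_le_mul (X.norm_entry_le_entrywise_sup_norm)
          (Y.norm_entry_le_entrywise_sup_norm) (abs_nonneg _) (norm_nonneg _)
    _ = (Fintype.card m : ℝ) * (‖X‖ * ‖Y‖) := by
        rw [Finset.sum_const, Finset.card_univ, nsmul_eq_mul]
    _ = (Fintype.card m : ℝ) * ‖X‖ * ‖Y‖ := by ring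

theorem trace_le_card_norm (M : Matrix n n ℝ) :
    M.trace ≤ (Fintype.card n : ℝ) * ‖M‖ := by
  calc M.trace = ∑ i, M i i := rfl
    _ ≤ ∑ _i : n, ‖M‖ := Finset.sum_le_sum fun i _ =>
        (le_abs_self _).trans (M.norm_entry_le_entrywise_sup_norm)
    _ = (Fintype.card n : ℝ) * ‖M‖ := by
        rw [Finset.sum_const, Finset.card_univ, nsmul_eq_mul]


end A

section B


variable {E : Type*} [NormedAddCommGroup E] [NormedSpace ℝ E]

/-- radial retraction onto the closed ball of radius `R` -/
noncomputable def rad (R : ℝ) (x : E) : E := (R / max R ‖x‖) • x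

theorem rad_eq_self {R : ℝ} (hR : 0 < R) {x : E} (hx : ‖x‖ ≤ R) : rad R x = x := by
  rw [rad, max_eq_left hx, div_self hR.ne', one_smul]

theorem norm_rad_le {R : ℝ} (hR : 0 < R) (x : E) : ‖rad R x‖ ≤ R := by
  rw [rad, norm_smul]
  rcases le_or_gt ‖x‖ R with h | h
  · rw [max_eq_left h, div_self hR.ne', norm_one, one_mul]; exact h
  · have hx0 : (0:ℝ) < ‖x‖ := hR.trans h
    rw [max_eq_right h.le, Real.norm_eq_abs, abs_of_nonneg (by positivity)]
    exact le_of_eq (by field_simp)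

theorem norm_rad_sub_rad_le {R : ℝ} (hR : 0 < R) (x y : E) :
    ‖rad R x - rad R y‖ ≤ 2 * ‖x - y‖ := by
  set mx := max R ‖x‖ with hmx
  set my := max R ‖y‖ with hmy
  have hmxp : 0 < mx := lt_of_lt_of_le hR (le_max_left _ _)
  have hmyp : 0 < my := lt_of_lt_of_le hR (le_max_left _ _)
  have key : rad R x - rad R y = (R / mx) • (x - y) + ((R / mx) - (R / my)) • y := by
    rw [rad, rad, smul_sub, sub_smul]; abel
  rw [key]
  have h1 : ‖(R / mx) • (x - y)‖ ≤ ‖x - y‖ := by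
    rw [norm_smul, Real.norm_eq_abs, abs_of_nonneg (by positivity)]
    have : R / mx ≤ 1 := (div_le_one hmxp).2 (le_max_left _ _)
    nlinarith [norm_nonneg (x - y)]
  have h2 : ‖((R / mx) - (R / my)) • y‖ ≤ ‖x - y‖ := by
    rw [norm_smul, Real.norm_eq_abs]
    have hdiff : |R / mx - R / my| = R * |my - mx| / (mx * my) := by
      rw [div_sub_div _ _ hmxp.ne' hmyp.ne', abs_div]
      rw [abs_of_pos (by positivity : (0:ℝ) < mx * my), mul_comm mx R, ← mul_sub, abs_mul,
        abs_of_pos hR]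
    rw [hdiff]
    have hmm : |my - mx| ≤ ‖x - y‖ := by
      have := abs_max_sub_max_le_abs ‖y‖ ‖x‖ R
      rw [max_comm ‖y‖ R, max_comm ‖x‖ R] at this
      calc |my - mx| ≤ |‖y‖ - ‖x‖| := this
        _ ≤ ‖y - x‖ := abs_norm_sub_norm_le _ _
        _ = ‖x - y‖ := norm_sub_rev _ _
    have hy : ‖y‖ ≤ my := le_max_right _ _
    calc R * |my - mx| / (mx * my) * ‖y‖
        ≤ R * ‖x - y‖ / (mx * my) * my := by
          apply mul_le_mul _ hy (norm_nonneg _) (by positivity)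
          apply div_le_div_of_nonneg_right _ (by positivity)
          · exact mul_le_mul_of_nonneg_left hmm hR.le
      _ = (R / mx) * ‖x - y‖ := by field_simp
      _ ≤ 1 * ‖x - y‖ := by
          apply mul_le_mul_of_nonneg_right _ (norm_nonneg _)
          exact (div_le_one hmxp).2 (le_max_left _ _)
      _ = ‖x - y‖ := one_mul _
  calc ‖(R / mx) • (x - y) + ((R / mx) - (R / my)) • y‖
      ≤ ‖(R / mx) • (x - y)‖ + ‖((R / mx) - (R / my)) • y‖ := norm_add_le _ _
    _ ≤ 2 * ‖x - y‖ := by linarith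

theorem rad_continuous {R : ℝ} (hR : 0 < R) : Continuous (rad (E := E) R) := by
  rw [Metric.continuous_iff]
  intro x ε hε
  exact ⟨ε / 2, by positivity, fun y hy => by
    rw [dist_eq_norm] at *
    calc ‖rad R y - rad R x‖ ≤ 2 * ‖y - x‖ := norm_rad_sub_rad_le hR _ _
      _ < ε := by linarith⟩


end B

section C


variable {n : Type*} [Fintype n] [DecidableEq n]

theorem transpose_eq_self_of_hermitian {M : Matrix n n ℝ} (h : M.IsHermitian) : Mᵀ = M := by
  rw [← Matrix.conjTranspose_eq_transpose_of_trivial]; exact h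

theorem hermitian_of_transpose_eq_self {M : Matrix n n ℝ} (h : Mᵀ = M) : M.IsHermitian := by
  rw [Matrix.IsHermitian, Matrix.conjTranspose_eq_transpose_of_trivial]; exact h

theorem qf_eq_star {M : Matrix n n ℝ} (x : n → ℝ) :
    dotProduct (star x) (M *ᵥ x) = x ⬝ᵥ (M *ᵥ x) := by
  rw [star_trivial]

theorem posSemidef_iff {M : Matrix n n ℝ} :
    M.PosSemidef ↔ M.IsHermitian ∧ ∀ x : n → ℝ, 0 ≤ x ⬝ᵥ (M *ᵥ x) := by
  rw [Matrix.posSemidef_iff_dotProduct_mulVec]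
  simp_rw [qf_eq_star]

theorem posDef_iff {M : Matrix n n ℝ} :
    M.PosDef ↔ M.IsHermitian ∧ ∀ x : n → ℝ, x ≠ 0 → 0 < x ⬝ᵥ (M *ᵥ x) := by
  rw [Matrix.posDef_iff_dotProduct_mulVec]
  simp_rw [qf_eq_star]

theorem qf_symm {M : Matrix n n ℝ} (h : Mᵀ = M) (v w : n → ℝ) :
    v ⬝ᵥ (M *ᵥ w) = w ⬝ᵥ (M *ᵥ v) := by
  rw [Matrix.dotProduct_mulVec, ← Matrix.mulVec_transpose, h, dotProduct_comm]

theorem diag_nonneg_of_posSemidef {M : Matrix n n ℝ} (hM : M.PosSemidef) (i : n) :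
    0 ≤ M i i := by
  have := (posSemidef_iff.mp hM).2 (Pi.single i 1)
  simpa [Matrix.mulVec_single, single_dotProduct] using this

theorem trace_nonneg_of_posSemidef {M : Matrix n n ℝ} (hM : M.PosSemidef) :
    0 ≤ M.trace := by
  exact Finset.sum_nonneg fun i _ => diag_nonneg_of_posSemidef hM i

theorem diag_le_trace_of_posSemidef {M : Matrix n n ℝ} (hM : M.PosSemidef) (i : n) :
    M i i ≤ M.trace := by
  exact Finset.single_le_sum (fun k _ => diag_nonneg_of_posSemidef hM k) (Finset.mem_univ i)

theorem entry_abs_le_trace_of_posSemidef {M : Matrix n n ℝ} (hM : M.PosSemidef) (i j : n) :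
    |M i j| ≤ M.trace := by
  have hsym : Mᵀ = M := transpose_eq_self_of_hermitian hM.1
  have hji : M j i = M i j := congrFun (congrFun hsym i) j
  by_cases hij : i = j
  · subst hij
    rw [abs_of_nonneg (diag_nonneg_of_posSemidef hM i)]
    exact diag_le_trace_of_posSemidef hM i
  · have key : ∀ c : ℝ, 0 ≤ M i i + c * (M i j + M j i) + c ^ 2 * M j j := by
      intro c
      have := (posSemidef_iff.mp hM).2 (Pi.single i 1 + Pi.single j c)
      rw [Matrix.mulVec_add, dotProduct_add, add_dotProduct,
        add_dotProduct] at this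
      simp only [Matrix.mulVec_single, single_dotProduct, Pi.smul_apply, Matrix.col_apply,
        op_smul_eq_mul] at this
      nlinarith [this]
    have h1 := key 1
    have h2 := key (-1)
    have hii := diag_le_trace_of_posSemidef hM i
    have hjj := diag_le_trace_of_posSemidef hM j
    rw [abs_le]
    constructor <;> nlinarith

theorem norm_le_trace_of_posSemidef {M : Matrix n n ℝ} (hM : M.PosSemidef) :
    ‖M‖ ≤ M.trace := by
  rw [Matrix.norm_le_iff (trace_nonneg_of_posSemidef hM)]
  intro i j
  exact entry_abs_le_trace_of_posSemidef hM i j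

theorem mulVec_eq_zero_of_qf_eq_zero {M : Matrix n n ℝ} (hM : M.PosSemidef) {x : n → ℝ}
    (hx : x ⬝ᵥ (M *ᵥ x) = 0) : M *ᵥ x = 0 := by
  have hsym : Mᵀ = M := transpose_eq_self_of_hermitian hM.1
  have key : ∀ w : n → ℝ, w ⬝ᵥ (M *ᵥ x) = 0 := by
    intro w
    set a := w ⬝ᵥ (M *ᵥ w) with ha
    set b := w ⬝ᵥ (M *ᵥ x) with hb
    have hanneg : 0 ≤ a := (posSemidef_iff.mp hM).2 w
    by_contra hbne
    have hquad : ∀ t : ℝ, 0 ≤ 2 * t * b + t ^ 2 * a := by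
      intro t
      have := (posSemidef_iff.mp hM).2 (x + t • w)
      rw [Matrix.mulVec_add, Matrix.mulVec_smul, dotProduct_add,
        add_dotProduct, add_dotProduct, dotProduct_smul,
        smul_dotProduct, smul_dotProduct, dotProduct_smul] at this
      have hxw : x ⬝ᵥ (M *ᵥ w) = b := qf_symm hsym x w
      rw [hx, hxw] at this
      simp only [smul_eq_mul] at this
      nlinarith [this]
    have hb2 : 0 < b ^ 2 := by positivity
    have ha1 : (0:ℝ) < a + 1 := by linarith
    have hq := hquad (-b / (a + 1))
    have key2 : 2 * (-b / (a + 1)) * b + (-b / (a + 1)) ^ 2 * a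
        = -(b ^ 2 * (a + 2)) / (a + 1) ^ 2 := by
      field_simp
      ring
    rw [key2, le_div_iff₀ (by positivity : (0:ℝ) < (a + 1) ^ 2)] at hq
    nlinarith [hq, hb2, hanneg]
  funext k
  have := key (Pi.single k 1)
  rwa [single_dotProduct, one_mul] at this


end C

section D


variable {n : Type*} [Fintype n] [DecidableEq n] [Nonempty n]

/-- quadratic form of a matrix -/
def qf (M : Matrix n n ℝ) (z : n → ℝ) : ℝ := z ⬝ᵥ (M *ᵥ z)

theorem qf_continuous (M : Matrix n n ℝ) : Continuous (qf M) := by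
  unfold qf dotProduct Matrix.mulVec
  exact continuous_finset_sum _ fun i _ => (continuous_apply i).mul
    (continuous_finset_sum _ fun j _ => continuous_const.mul (continuous_apply j))

theorem qf_sub (M M' : Matrix n n ℝ) (z : n → ℝ) :
    qf M z - qf M' z = qf (M - M') z := by
  simp [qf, Matrix.sub_mulVec, dotProduct_sub]

theorem qf_smul (M : Matrix n n ℝ) (c : ℝ) (z : n → ℝ) :
    qf M (c • z) = c ^ 2 * qf M z := by
  simp [qf, Matrix.mulVec_smul, smul_dotProduct, dotProduct_smul]
  ring

theorem abs_qf_le (M : Matrix n n ℝ) {z : n → ℝ} (hz : ‖z‖ ≤ 1) :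
    |qf M z| ≤ (Fintype.card n : ℝ) ^ 2 * ‖M‖ := by
  have hzi : ∀ i, |z i| ≤ 1 := fun i => (norm_le_pi_norm z i).trans hz
  calc |qf M z| = |∑ i, z i * ∑ j, M i j * z j| := rfl
    _ ≤ ∑ i, |z i * ∑ j, M i j * z j| := Finset.abs_sum_le_sum_abs _ _
    _ ≤ ∑ _i : n, (Fintype.card n : ℝ) * ‖M‖ := by
        refine Finset.sum_le_sum fun i _ => ?_
        rw [abs_mul]
        have h1 : |∑ j, M i j * z j| ≤ (Fintype.card n : ℝ) * ‖M‖ := by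
          calc |∑ j, M i j * z j| ≤ ∑ j, |M i j * z j| := Finset.abs_sum_le_sum_abs _ _
            _ ≤ ∑ _j : n, ‖M‖ := by
                refine Finset.sum_le_sum fun j _ => ?_
                rw [abs_mul]
                calc |M i j| * |z j| ≤ ‖M‖ * 1 :=
                      mul_le_mul (M.norm_entry_le_entrywise_sup_norm) (hzi j)
                        (abs_nonneg _) (norm_nonneg _)
                  _ = ‖M‖ := mul_one _
            _ = (Fintype.card n : ℝ) * ‖M‖ := by
                rw [Finset.sum_const, Finset.card_univ, nsmul_eq_mul]
        calc |z i| * |∑ j, M i j * z j| ≤ 1 * ((Fintype.card n : ℝ) * ‖M‖) :=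
              mul_le_mul (hzi i) h1 (abs_nonneg _) zero_le_one
          _ = (Fintype.card n : ℝ) * ‖M‖ := one_mul _
    _ = (Fintype.card n : ℝ) * ((Fintype.card n : ℝ) * ‖M‖) := by
        rw [Finset.sum_const, Finset.card_univ, nsmul_eq_mul]
    _ = (Fintype.card n : ℝ) ^ 2 * ‖M‖ := by ring

/-- the minimum of the quadratic form on the unit sphere -/
noncomputable def minForm (M : Matrix n n ℝ) : ℝ :=
  sInf (qf M '' Metric.sphere (0 : n → ℝ) 1)

theorem sphere_compact : IsCompact (Metric.sphere (0 : n → ℝ) 1) :=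
  isCompact_sphere _ _

theorem sphere_ne : (Metric.sphere (0 : n → ℝ) 1).Nonempty :=
  NormedSpace.sphere_nonempty.mpr zero_le_one

theorem minForm_le (M : Matrix n n ℝ) {z : n → ℝ} (hz : ‖z‖ = 1) : minForm M ≤ qf M z := by
  refine csInf_le ((sphere_compact.image (qf_continuous M)).bddBelow) ?_
  exact ⟨z, by simpa [mem_sphere_iff_norm] using hz, rfl⟩

theorem minForm_attained (M : Matrix n n ℝ) : ∃ z : n → ℝ, ‖z‖ = 1 ∧ minForm M = qf M z := by
  have h := (sphere_compact.image (qf_continuous M)).sInf_mem (sphere_ne.image _)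
  obtain ⟨z, hz, hzq⟩ := h
  exact ⟨z, by simpa [mem_sphere_iff_norm] using hz, hzq.symm⟩

theorem abs_minForm_sub_le (M M' : Matrix n n ℝ) :
    |minForm M - minForm M'| ≤ (Fintype.card n : ℝ) ^ 2 * ‖M - M'‖ := by
  have key : ∀ A B : Matrix n n ℝ, minForm A - minForm B ≤ (Fintype.card n : ℝ) ^ 2 * ‖A - B‖ := by
    intro A B
    obtain ⟨z, hz, hzq⟩ := minForm_attained B
    have h1 : minForm A ≤ qf A z := minForm_le A hz
    have h2 : qf A z - qf B z ≤ (Fintype.card n : ℝ) ^ 2 * ‖A - B‖ := by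
      rw [qf_sub]
      exact (le_abs_self _).trans (abs_qf_le _ hz.le)
    linarith
  rw [abs_sub_le_iff]
  refine ⟨key M M', ?_⟩
  rw [norm_sub_rev]
  exact key M' M

theorem minForm_lipschitz :
    LipschitzWith ((Fintype.card n : ℝ≥0) ^ 2) (minForm (n := n)) := by
  refine LipschitzWith.of_dist_le_mul fun M M' => ?_
  rw [dist_eq_norm, dist_eq_norm, Real.norm_eq_abs]
  simpa using abs_minForm_sub_le M M'

theorem posDef_of_unit_qf {M : Matrix n n ℝ} (hsym : Mᵀ = M)
    (h : ∀ z : n → ℝ, ‖z‖ = 1 → 0 < qf M z) : M.PosDef := by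
  rw [posDef_iff]
  refine ⟨hermitian_of_transpose_eq_self hsym, fun x hx => ?_⟩
  have hc : (0:ℝ) < ‖x‖ := norm_pos_iff.mpr hx
  set u := ‖x‖⁻¹ • x with hu
  have hun : ‖u‖ = 1 := by
    rw [hu, norm_smul, norm_inv, norm_norm, inv_mul_cancel₀ hc.ne']
  have hxu : x = ‖x‖ • u := by
    rw [hu, smul_smul, mul_inv_cancel₀ hc.ne', one_smul]
  have : x ⬝ᵥ (M *ᵥ x) = ‖x‖ ^ 2 * qf M u := by
    conv_lhs => rw [hxu]
    exact qf_smul M ‖x‖ u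
  rw [this]
  exact mul_pos (by positivity) (h u hun)

theorem posSemidef_of_unit_qf {M : Matrix n n ℝ} (hsym : Mᵀ = M)
    (h : ∀ z : n → ℝ, ‖z‖ = 1 → 0 ≤ qf M z) : M.PosSemidef := by
  rw [posSemidef_iff]
  refine ⟨hermitian_of_transpose_eq_self hsym, fun x => ?_⟩
  by_cases hx : x = 0
  · simp [hx]
  have hc : (0:ℝ) < ‖x‖ := norm_pos_iff.mpr hx
  set u := ‖x‖⁻¹ • x with hu
  have hun : ‖u‖ = 1 := by
    rw [hu, norm_smul, norm_inv, norm_norm, inv_mul_cancel₀ hc.ne']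
  have hxu : x = ‖x‖ • u := by
    rw [hu, smul_smul, mul_inv_cancel₀ hc.ne', one_smul]
  have : x ⬝ᵥ (M *ᵥ x) = ‖x‖ ^ 2 * qf M u := by
    conv_lhs => rw [hxu]
    exact qf_smul M ‖x‖ u
  rw [this]
  exact mul_nonneg (by positivity) (h u hun)

theorem minForm_pos_of_posDef {M : Matrix n n ℝ} (hM : M.PosDef) : 0 < minForm M := by
  obtain ⟨z, hz, hzq⟩ := minForm_attained M
  rw [hzq]
  exact (posDef_iff.mp hM).2 z (fun h0 => by simp [h0] at hz)

/-- the quadratic form as a linear map in the matrix -/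
def qfLin (z : n → ℝ) : Matrix n n ℝ →ₗ[ℝ] ℝ where
  toFun M := qf M z
  map_add' A B := by simp [qf, Matrix.add_mulVec, dotProduct_add]
  map_smul' c A := by
    simp [qf, Matrix.smul_mulVec, dotProduct_smul]

@[simp] theorem qfLin_apply (z : n → ℝ) (M : Matrix n n ℝ) : qfLin z M = qf M z := rfl

theorem hasDerivWithinAt_linComp {f : ℝ → Matrix n n ℝ} {f' : Matrix n n ℝ} {s : Set ℝ} {τ : ℝ}
    (L : Matrix n n ℝ →ₗ[ℝ] ℝ) (h : HasDerivWithinAt f f' s τ) :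
    HasDerivWithinAt (fun t => L (f t)) (L f') s τ :=
  (LinearMap.toContinuousLinearMap L).hasFDerivAt.comp_hasDerivWithinAt τ h


end D



section E


/-- derivative at a right-endpoint minimum is nonpositive -/
theorem deriv_nonpos_at_right_min {f : ℝ → ℝ} {f' a b : ℝ} (hab : a < b)
    (hd : HasDerivWithinAt f f' (Icc a b) b) (hfb : f b = 0)
    (hf : ∀ σ ∈ Icc a b, 0 ≤ f σ) : f' ≤ 0 := by
  rw [hasDerivWithinAt_iff_tendsto_slope] at hd
  rw [Icc_sdiff_right, nhdsWithin_Ico_eq_nhdsLT hab] at hd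
  refine le_of_tendsto hd ?_
  filter_upwards [Ioo_mem_nhdsLT_of_mem (Set.mem_Ioc.mpr ⟨hab, le_refl b⟩)] with σ hσ
  rw [slope_def_field]
  have h1 : 0 ≤ f σ := hf σ ⟨hσ.1.le, hσ.2.le⟩
  have h2 : σ - b < 0 := by linarith [hσ.2]
  rw [div_nonpos_iff]
  exact Or.inl ⟨by rw [hfb]; linarith, h2.le⟩

/-- integral bound from a derivative bound -/
theorem le_of_hasDerivWithinAt_le {f d : ℝ → ℝ} {a b c0 : ℝ} (hab : a ≤ b)
    (hf : ∀ τ ∈ Icc a b, HasDerivWithinAt f (d τ) (Icc a b) τ)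
    (hle : ∀ τ ∈ Icc a b, d τ ≤ c0) :
    ∀ τ ∈ Icc a b, f τ ≤ f a + c0 * (τ - a) := by
  set g : ℝ → ℝ := fun τ => c0 * (τ - a) - (f τ - f a) with hg
  have hgd : ∀ x ∈ Ioo a b, HasDerivAt g (c0 - d x) x := by
    intro x hx
    have hfx : HasDerivAt f (d x) x :=
      (hf x ⟨hx.1.le, hx.2.le⟩).hasDerivAt (Icc_mem_nhds hx.1 hx.2)
    have h1 : HasDerivAt (fun τ => c0 * (τ - a)) (c0 * 1) x :=
      ((hasDerivAt_id x).sub_const a).const_mul c0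
    rw [mul_one] at h1
    exact h1.sub (hfx.sub_const (f a))
  have hgc : ContinuousOn g (Icc a b) := by
    refine (continuousOn_const.mul (continuousOn_id.sub continuousOn_const)).sub
      (ContinuousOn.sub ?_ continuousOn_const)
    exact fun x hx => (hf x hx).continuousWithinAt
  have hmono : MonotoneOn g (Icc a b) := by
    refine monotoneOn_of_deriv_nonneg (convex_Icc a b) hgc ?_ ?_
    · intro x hx
      rw [interior_Icc] at hx
      exact (hgd x hx).differentiableAt.differentiableWithinAt
    · intro x hx
      rw [interior_Icc] at hx
      rw [(hgd x hx).deriv]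
      have := hle x ⟨hx.1.le, hx.2.le⟩
      linarith
  intro τ hτ
  have h0 : g a ≤ g τ := hmono (left_mem_Icc.mpr hab) hτ hτ.1
  simp only [hg, sub_self, mul_zero, zero_sub, neg_sub] at h0
  linarith [h0]

/-- restriction of a derivative within `Icc` to within `Ici` at an interior-from-left point -/
theorem hasDerivWithinAt_Ici_of_Icc {E : Type*} [NormedAddCommGroup E] [NormedSpace ℝ E]
    {f : ℝ → E} {f' : E} {a b t : ℝ} (ht : t ∈ Ico a b)
    (h : HasDerivWithinAt f f' (Icc a b) t) : HasDerivWithinAt f f' (Ici t) t :=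
  h.mono_of_mem_nhdsWithin (Icc_mem_nhdsGE_of_mem ht)

theorem posSemidef_smul {n : Type*} [Fintype n] [DecidableEq n] {M : Matrix n n ℝ}
    (hM : M.PosSemidef) {r : ℝ} (hr : 0 ≤ r) : (r • M).PosSemidef := by
  rw [posSemidef_iff] at hM ⊢
  constructor
  · exact hermitian_of_transpose_eq_self (by rw [Matrix.transpose_smul,
      transpose_eq_self_of_hermitian hM.1])
  · intro x
    rw [Matrix.smul_mulVec, dotProduct_smul, smul_eq_mul]
    exact mul_nonneg hr (hM.2 x)

theorem trace_diagonal_mul {n : Type*} [Fintype n] [DecidableEq n] (d : n → ℝ)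
    (M : Matrix n n ℝ) : (Matrix.diagonal d * M).trace = ∑ i, d i * M i i := by
  unfold Matrix.trace
  congr 1
  funext i
  rw [Matrix.diag_apply, Matrix.diagonal_mul]

theorem trace_conj_nonneg {n : Type*} [Fintype n] [DecidableEq n] {A : Matrix n n ℝ}
    (hA : A.PosSemidef) {G : Matrix n n ℝ} (hG : G.PosSemidef) (hGs : Gᵀ = G) :
    0 ≤ (G * A * G).trace := by
  have h1 : (Gᵀ * A * G).PosSemidef := by
    have := hA.conjTranspose_mul_mul_same G
    rwa [Matrix.conjTranspose_eq_transpose_of_trivial] at this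
  rw [hGs] at h1
  exact trace_nonneg_of_posSemidef h1

end E


section F

variable {n : Type*} [Fintype n] [DecidableEq n]

theorem hasDerivWithinAt_comp_linear {F G : Type*} [NormedAddCommGroup F] [NormedSpace ℝ F]
    [FiniteDimensional ℝ F] [NormedAddCommGroup G] [NormedSpace ℝ G]
    {f : ℝ → F} {f' : F} {s : Set ℝ} {τ : ℝ}
    (L : F →ₗ[ℝ] G) (h : HasDerivWithinAt f f' s τ) :
    HasDerivWithinAt (fun t => L (f t)) (L f') s τ :=
  (LinearMap.toContinuousLinearMap L).hasFDerivAt.comp_hasDerivWithinAt τ h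

theorem rad_transpose (R : ℝ) (X : Matrix n n ℝ) : (rad R X)ᵀ = rad R Xᵀ := by
  rw [rad, rad, Matrix.transpose_smul, Matrix.norm_transpose]

theorem rad_posSemidef {R : ℝ} (hR : 0 < R) {M : Matrix n n ℝ} (hM : M.PosSemidef) :
    (rad R M).PosSemidef := by
  rw [rad]
  exact posSemidef_smul hM (by positivity)

theorem rad_mulVec_eq_zero {R : ℝ} {M : Matrix n n ℝ} {z : n → ℝ} (hz : M *ᵥ z = 0) :
    rad R M *ᵥ z = 0 := by
  rw [rad, Matrix.smul_mulVec, hz, smul_zero]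

/-- value of the quadratic form of the cutoff Riccati field on a kernel vector -/
theorem qf_field_eq {R c0 γi : ℝ} (Q D A : Matrix n n ℝ) {M : Matrix n n ℝ} {z : n → ℝ}
    (hz : M *ᵥ z = 0) (hMs : Mᵀ = M) :
    qf (c0 • Q + γi • (D * rad R M + rad R M * D) - rad R M * A * rad R M) z
      = c0 * qf Q z := by
  set G := rad R M with hG
  have hGz : G *ᵥ z = 0 := rad_mulVec_eq_zero hz
  have hGs : Gᵀ = G := by rw [hG, rad_transpose, hMs]
  have h1 : qf (D * G) z = 0 := by
    rw [qf, ← Matrix.mulVec_mulVec, hGz, Matrix.mulVec_zero, dotProduct_zero]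
  have h2 : qf (G * D) z = 0 := by
    rw [qf, ← Matrix.mulVec_mulVec, qf_symm hGs, hGz, dotProduct_zero]
  have h3 : qf (G * A * G) z = 0 := by
    rw [qf, ← Matrix.mulVec_mulVec, hGz, Matrix.mulVec_zero, dotProduct_zero]
  have hadd : ∀ (P P' : Matrix n n ℝ), qf (P + P') z = qf P z + qf P' z := fun P P' => by
    rw [qf, qf, qf, Matrix.add_mulVec, dotProduct_add]
  have hsub : ∀ (P P' : Matrix n n ℝ), qf (P - P') z = qf P z - qf P' z := fun P P' => by
    rw [qf, qf, qf, Matrix.sub_mulVec, dotProduct_sub]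
  have hsmul : ∀ (c : ℝ) (P : Matrix n n ℝ), qf (c • P) z = c * qf P z := fun c P => by
    rw [qf, qf, Matrix.smul_mulVec, dotProduct_smul, smul_eq_mul]
  rw [hsub, hadd, hsmul, hsmul, hadd, h1, h2, h3]
  ring

/-- trace bound for the cutoff Riccati field -/
theorem trace_field_le {c0 γi K0 : ℝ} {Q A G : Matrix n n ℝ} {d : n → ℝ}
    (hG : G.PosSemidef) (hGs : Gᵀ = G) (hA : A.PosSemidef) (hd : ∀ i, d i ≤ 0)
    (hγi : 0 ≤ γi) (htr : Q.trace ≤ K0) (hc0 : 0 ≤ c0) :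
    (c0 • Q + γi • (Matrix.diagonal d * G + G * Matrix.diagonal d)
      - G * A * G).trace ≤ c0 * K0 := by
  rw [Matrix.trace_sub, Matrix.trace_add, Matrix.trace_smul, Matrix.trace_smul,
    Matrix.trace_add]
  have h1 : (Matrix.diagonal d * G).trace ≤ 0 := by
    rw [trace_diagonal_mul]
    exact Finset.sum_nonpos fun i _ =>
      mul_nonpos_iff.mpr (Or.inr ⟨hd i, diag_nonneg_of_posSemidef hG i⟩)
  have h2 : (G * Matrix.diagonal d).trace ≤ 0 := by
    rw [Matrix.trace_mul_comm]; exact h1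
  have h3 : 0 ≤ (G * A * G).trace := trace_conj_nonneg hA hG hGs
  have h4 : c0 • Q.trace ≤ c0 * K0 := by
    rw [smul_eq_mul]; exact mul_le_mul_of_nonneg_left htr hc0
  have h5 : γi • ((Matrix.diagonal d * G).trace + (G * Matrix.diagonal d).trace) ≤ 0 := by
    rw [smul_eq_mul]
    exact mul_nonpos_iff.mpr (Or.inl ⟨hγi, by linarith⟩)
  linarith [h4, h5, h3]

/-- Lipschitz-type bound for the Riccati field on a ball -/
theorem field_diff_bound {γi c0 BD r : ℝ} (hγi : 0 ≤ γi) (Q D A : Matrix n n ℝ)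
    (hD : ‖D‖ ≤ BD) (hBD : 0 ≤ BD) {X Y : Matrix n n ℝ} (hX : ‖X‖ ≤ r) (hY : ‖Y‖ ≤ r)
    (hr : 0 ≤ r) :
    ‖(c0 • Q + γi • (D * X + X * D) - X * A * X)
      - (c0 • Q + γi • (D * Y + Y * D) - Y * A * Y)‖
      ≤ (γi * (2 * (Fintype.card n : ℝ) * BD)
          + 2 * (Fintype.card n : ℝ) ^ 2 * ‖A‖ * r) * ‖X - Y‖ := by
  set cN := (Fintype.card n : ℝ) with hcN
  have hcN0 : 0 ≤ cN := Nat.cast_nonneg _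
  have hsplit : (c0 • Q + γi • (D * X + X * D) - X * A * X)
      - (c0 • Q + γi • (D * Y + Y * D) - Y * A * Y)
      = γi • (D * (X - Y) + (X - Y) * D) - ((X - Y) * A * X + Y * A * (X - Y)) := by
    simp only [Matrix.mul_sub, Matrix.sub_mul, smul_sub, smul_add]
    abel
  rw [hsplit]
  have hXY := norm_nonneg (X - Y)
  have hA0 := norm_nonneg A
  have h1 : ‖D * (X - Y)‖ ≤ cN * BD * ‖X - Y‖ := by
    calc ‖D * (X - Y)‖ ≤ cN * ‖D‖ * ‖X - Y‖ := norm_mul_le_card _ _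
      _ ≤ cN * BD * ‖X - Y‖ := by
          apply mul_le_mul_of_nonneg_right _ hXY
          exact mul_le_mul_of_nonneg_left hD hcN0
  have h2 : ‖(X - Y) * D‖ ≤ cN * BD * ‖X - Y‖ := by
    calc ‖(X - Y) * D‖ ≤ cN * ‖X - Y‖ * ‖D‖ := norm_mul_le_card _ _
      _ ≤ cN * BD * ‖X - Y‖ := by
          rw [mul_assoc, mul_assoc]
          apply mul_le_mul_of_nonneg_left _ hcN0
          rw [mul_comm BD]
          exact mul_le_mul_of_nonneg_left hD hXY
  have h3 : ‖(X - Y) * A * X‖ ≤ cN ^ 2 * ‖A‖ * r * ‖X - Y‖ := by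
    calc ‖(X - Y) * A * X‖ ≤ cN * ‖(X - Y) * A‖ * ‖X‖ := norm_mul_le_card _ _
      _ ≤ cN * (cN * ‖X - Y‖ * ‖A‖) * ‖X‖ := by
          apply mul_le_mul_of_nonneg_right _ (norm_nonneg X)
          exact mul_le_mul_of_nonneg_left (norm_mul_le_card _ _) hcN0
      _ ≤ cN ^ 2 * ‖A‖ * r * ‖X - Y‖ := by
          have hb : 0 ≤ cN * (cN * ‖X - Y‖ * ‖A‖) := by positivity
          calc cN * (cN * ‖X - Y‖ * ‖A‖) * ‖X‖ ≤ cN * (cN * ‖X - Y‖ * ‖A‖) * r :=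
                mul_le_mul_of_nonneg_left hX hb
            _ = cN ^ 2 * ‖A‖ * r * ‖X - Y‖ := by ring
  have h4 : ‖Y * A * (X - Y)‖ ≤ cN ^ 2 * ‖A‖ * r * ‖X - Y‖ := by
    calc ‖Y * A * (X - Y)‖ ≤ cN * ‖Y * A‖ * ‖X - Y‖ := norm_mul_le_card _ _
      _ ≤ cN * (cN * ‖Y‖ * ‖A‖) * ‖X - Y‖ := by
          apply mul_le_mul_of_nonneg_right _ hXY
          exact mul_le_mul_of_nonneg_left (norm_mul_le_card _ _) hcN0
      _ ≤ cN ^ 2 * ‖A‖ * r * ‖X - Y‖ := by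
          apply mul_le_mul_of_nonneg_right _ hXY
          have : cN * ‖Y‖ * ‖A‖ ≤ cN * r * ‖A‖ := by
            apply mul_le_mul_of_nonneg_right _ hA0
            exact mul_le_mul_of_nonneg_left hY hcN0
          nlinarith [hcN0, hA0, hr, norm_nonneg Y]
  have hs : ‖γi • (D * (X - Y) + (X - Y) * D)‖ ≤ γi * (2 * cN * BD) * ‖X - Y‖ := by
    rw [norm_smul, Real.norm_eq_abs, abs_of_nonneg hγi]
    calc γi * ‖D * (X - Y) + (X - Y) * D‖
        ≤ γi * (‖D * (X - Y)‖ + ‖(X - Y) * D‖) :=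
          mul_le_mul_of_nonneg_left (norm_add_le _ _) hγi
      _ ≤ γi * (2 * cN * BD * ‖X - Y‖) := by
          apply mul_le_mul_of_nonneg_left _ hγi
          linarith
      _ = γi * (2 * cN * BD) * ‖X - Y‖ := by ring
  calc ‖γi • (D * (X - Y) + (X - Y) * D) - ((X - Y) * A * X + Y * A * (X - Y))‖
      ≤ ‖γi • (D * (X - Y) + (X - Y) * D)‖ + ‖(X - Y) * A * X + Y * A * (X - Y)‖ :=
        norm_sub_le _ _
    _ ≤ γi * (2 * cN * BD) * ‖X - Y‖ + (‖(X - Y) * A * X‖ + ‖Y * A * (X - Y)‖) := by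
        linarith [norm_add_le ((X - Y) * A * X) (Y * A * (X - Y))]
    _ ≤ (γi * (2 * cN * BD) + 2 * cN ^ 2 * ‖A‖ * r) * ‖X - Y‖ := by nlinarith [h3, h4]

/-- norm bound for the Riccati field on a ball -/
theorem field_norm_bound {γi c0 BD BQ r : ℝ} (hγi : 0 ≤ γi) (hc0 : 0 ≤ c0)
    {Q D A G : Matrix n n ℝ} (hQ : ‖Q‖ ≤ BQ) (hD : ‖D‖ ≤ BD) (hG : ‖G‖ ≤ r)
    (hBD : 0 ≤ BD) (hr : 0 ≤ r) :
    ‖c0 • Q + γi • (D * G + G * D) - G * A * G‖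
      ≤ c0 * BQ + γi * (2 * (Fintype.card n : ℝ) * BD * r)
        + (Fintype.card n : ℝ) ^ 2 * ‖A‖ * r ^ 2 := by
  set cN := (Fintype.card n : ℝ) with hcN
  have hcN0 : 0 ≤ cN := Nat.cast_nonneg _
  have hA0 := norm_nonneg A
  have h1 : ‖c0 • Q‖ ≤ c0 * BQ := by
    rw [norm_smul, Real.norm_eq_abs, abs_of_nonneg hc0]
    exact mul_le_mul_of_nonneg_left hQ hc0
  have h2 : ‖D * G‖ ≤ cN * BD * r := by
    calc ‖D * G‖ ≤ cN * ‖D‖ * ‖G‖ := norm_mul_le_card _ _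
      _ ≤ cN * BD * r := by
          apply mul_le_mul (mul_le_mul_of_nonneg_left hD hcN0) hG (norm_nonneg _)
          positivity
  have h3 : ‖G * D‖ ≤ cN * BD * r := by
    calc ‖G * D‖ ≤ cN * ‖G‖ * ‖D‖ := norm_mul_le_card _ _
      _ ≤ cN * BD * r := by
          have : cN * ‖G‖ * ‖D‖ ≤ cN * r * BD :=
            mul_le_mul (mul_le_mul_of_nonneg_left hG hcN0) hD (norm_nonneg _) (by positivity)
          nlinarith [this]
  have h4 : ‖G * A * G‖ ≤ cN ^ 2 * ‖A‖ * r ^ 2 := by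
    calc ‖G * A * G‖ ≤ cN * ‖G * A‖ * ‖G‖ := norm_mul_le_card _ _
      _ ≤ cN * (cN * ‖G‖ * ‖A‖) * ‖G‖ := by
          apply mul_le_mul_of_nonneg_right _ (norm_nonneg G)
          exact mul_le_mul_of_nonneg_left (norm_mul_le_card _ _) hcN0
      _ ≤ cN ^ 2 * ‖A‖ * r ^ 2 := by
          have hGG : ‖G‖ * ‖G‖ ≤ r * r := mul_le_mul hG hG (norm_nonneg G) hr
          have hkey := mul_le_mul_of_nonneg_left hGG
            (mul_nonneg (mul_nonneg hcN0 hcN0) hA0)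
          nlinarith [hkey]
  have h5 : ‖γi • (D * G + G * D)‖ ≤ γi * (2 * cN * BD * r) := by
    rw [norm_smul, Real.norm_eq_abs, abs_of_nonneg hγi]
    calc γi * ‖D * G + G * D‖ ≤ γi * (‖D * G‖ + ‖G * D‖) :=
          mul_le_mul_of_nonneg_left (norm_add_le _ _) hγi
      _ ≤ γi * (2 * cN * BD * r) := by
          apply mul_le_mul_of_nonneg_left _ hγi
          linarith
  calc ‖c0 • Q + γi • (D * G + G * D) - G * A * G‖
      ≤ ‖c0 • Q + γi • (D * G + G * D)‖ + ‖G * A * G‖ := norm_sub_le _ _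
    _ ≤ ‖c0 • Q‖ + ‖γi • (D * G + G * D)‖ + ‖G * A * G‖ := by
        linarith [norm_add_le (c0 • Q) (γi • (D * G + G * D))]
    _ ≤ c0 * BQ + γi * (2 * cN * BD * r) + cN ^ 2 * ‖A‖ * r ^ 2 := by linarith

end F


end RicAux

/-- Theorem 5.1(i): existence, uniqueness, symmetry and positive (semi)definiteness of the
solution of the matrix Riccati equation arising when both futures and underlying assets
are traded. -/
theorem riccati_futures_and_spot
    (N : ℕ) (hN : 0 < N)
    (SF SFS SS : Matrix (Fin N) (Fin N) ℝ)
    (Sig : Matrix (Fin N ⊕ Fin N) (Fin N ⊕ Fin N) ℝ)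
    (hSigdef : Sig = Matrix.fromBlocks SF SFS SFSᵀ SS)
    (hSig : Sig.PosDef)
    (T : ℝ) (Tv : Fin N → ℝ) (hT : 0 < T) (hTv : ∀ i, T < Tv i)
    (etaFv etaSv : Fin N → ℝ) (hetav : ∀ i, etaFv i < etaSv i)
    (γ : ℝ) (hγ : 1 < γ)
    (C : Matrix (Fin N ⊕ Fin N) (Fin N) ℝ) (hC : C = Matrix.fromRows 1 (-1))
    (etaF etaS : ℝ → Matrix (Fin N) (Fin N) ℝ)
    (hetaF : ∀ t, etaF t = Matrix.diagonal fun i => etaFv i / (Tv i - t))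
    (hetaS : ∀ t, etaS t = Matrix.diagonal fun i => etaSv i / (Tv i - t))
    (eta : ℝ → Matrix (Fin N ⊕ Fin N) (Fin N) ℝ)
    (heta : ∀ t, eta t = Matrix.fromRows (etaF t) (etaS t)) :
    ∃ H : ℝ → Matrix (Fin N) (Fin N) ℝ,
      -- `H` solves the Riccati initial value problem on `[0, T]`
      (H 0 = 0 ∧
        ∃ H' : ℝ → Matrix (Fin N) (Fin N) ℝ,
          ContinuousOn H' (Icc 0 T) ∧
          ∀ τ ∈ Icc 0 T,
            HasDerivWithinAt H (H' τ) (Icc 0 T) τ ∧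
            H' τ + H τ * (Cᵀ * Sig * C) * H τ
              - (1/γ) • ((eta (T - τ))ᵀ * C * H τ + H τ * (Cᵀ * eta (T - τ)))
              - ((γ - 1)/γ^2) • ((eta (T - τ))ᵀ * Sig⁻¹ * eta (T - τ)) = 0) ∧
      -- the solution is unique
      (∀ K : ℝ → Matrix (Fin N) (Fin N) ℝ,
        (K 0 = 0 ∧
          ∃ K' : ℝ → Matrix (Fin N) (Fin N) ℝ,
            ContinuousOn K' (Icc 0 T) ∧
            ∀ τ ∈ Icc 0 T,
              HasDerivWithinAt K (K' τ) (Icc 0 T) τ ∧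
              K' τ + K τ * (Cᵀ * Sig * C) * K τ
                - (1/γ) • ((eta (T - τ))ᵀ * C * K τ + K τ * (Cᵀ * eta (T - τ)))
                - ((γ - 1)/γ^2) • ((eta (T - τ))ᵀ * Sig⁻¹ * eta (T - τ)) = 0) →
        EqOn K H (Icc 0 T)) ∧
      -- it is symmetric and positive semidefinite on `[0, T]`
      (∀ τ ∈ Icc 0 T, (H τ).IsSymm ∧ (H τ).PosSemidef) ∧
      -- and positive definite on `(0, T]`
      (∀ τ ∈ Ioc 0 T, (H τ).PosDef) := by
  classical
  haveI : Nonempty (Fin N) := Fin.pos_iff_nonempty.mp hN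
  have hγ0 : (0:ℝ) < γ := lt_trans one_pos hγ
  have hγi0 : (0:ℝ) ≤ γ⁻¹ := by positivity
  obtain ⟨c0, hc0⟩ : ∃ c0 : ℝ, c0 = (γ - 1)/γ^2 := ⟨_, rfl⟩
  have hc0pos : 0 < c0 := by rw [hc0]; exact div_pos (by linarith) (by positivity)
  obtain ⟨A, hA⟩ : ∃ A, A = Cᵀ * Sig * C := ⟨_, rfl⟩
  obtain ⟨Dm, hDm⟩ : ∃ Dm : ℝ → Matrix (Fin N) (Fin N) ℝ,
      ∀ τ, Dm τ = (eta (T - τ))ᵀ * C := ⟨_, fun _ => rfl⟩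
  obtain ⟨Qm, hQm⟩ : ∃ Qm : ℝ → Matrix (Fin N) (Fin N) ℝ,
      ∀ τ, Qm τ = (eta (T - τ))ᵀ * Sig⁻¹ * (eta (T - τ)) := ⟨_, fun _ => rfl⟩
  -- symmetry facts
  have hSigT : Sigᵀ = Sig := RicAux.transpose_eq_self_of_hermitian hSig.1
  have hAT : Aᵀ = A := by
    rw [hA, Matrix.transpose_mul, Matrix.transpose_mul, Matrix.transpose_transpose, hSigT,
      ← Matrix.mul_assoc]
  have hApsd : A.PosSemidef := by
    have := hSig.posSemidef.conjTranspose_mul_mul_same C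
    rwa [Matrix.conjTranspose_eq_transpose_of_trivial, ← hA] at this
  have hSiginv : (Sig⁻¹).PosDef := hSig.inv
  have hSiginvT : (Sig⁻¹)ᵀ = Sig⁻¹ := RicAux.transpose_eq_self_of_hermitian hSiginv.1
  have hQmT : ∀ τ, (Qm τ)ᵀ = Qm τ := by
    intro τ
    rw [hQm, Matrix.transpose_mul, Matrix.transpose_mul, Matrix.transpose_transpose, hSiginvT,
      ← Matrix.mul_assoc]
  -- the matrix `Dm` is diagonal
  have hden : ∀ τ, τ ∈ Icc (0:ℝ) T → ∀ i, 0 < Tv i - (T - τ) := by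
    intro τ hτ i
    have := hTv i
    have := hτ.1
    linarith
  have hDmdiag : ∀ τ, Dm τ =
      Matrix.diagonal (fun i => (etaFv i - etaSv i) / (Tv i - (T - τ))) := by
    intro τ
    rw [hDm, heta, hC, Matrix.transpose_fromRows, Matrix.fromCols_mul_fromRows,
      Matrix.mul_one, Matrix.mul_neg, Matrix.mul_one, hetaF, hetaS,
      Matrix.diagonal_transpose, Matrix.diagonal_transpose, ← sub_eq_add_neg,
      Matrix.diagonal_sub]
    congr 1
    funext i
    simp [div_sub_div_same]
  have hDmT : ∀ τ, (Dm τ)ᵀ = Dm τ := by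
    intro τ; rw [hDmdiag, Matrix.diagonal_transpose]
  have hCeta : ∀ τ, Cᵀ * eta (T - τ) = Dm τ := by
    intro τ
    rw [← hDmT τ, hDm, Matrix.transpose_mul, Matrix.transpose_transpose]
  -- bounds for Dm
  have hTvT : ∀ i, 0 < Tv i - T := fun i => by linarith [hTv i]
  obtain ⟨BD, hBD⟩ : ∃ BD : ℝ, BD = ∑ i, (etaSv i - etaFv i) / (Tv i - T) := ⟨_, rfl⟩
  have hBDpos : 0 < BD := by
    rw [hBD]
    exact Finset.sum_pos (fun i _ => div_pos (by linarith [hetav i]) (hTvT i))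
      Finset.univ_nonempty
  have hBDterm : ∀ τ ∈ Icc (0:ℝ) T, ∀ i,
      |(etaFv i - etaSv i) / (Tv i - (T - τ))| ≤ BD := by
    intro τ hτ i
    have h1 := hden τ hτ i
    have h2 := hTvT i
    have h3 : Tv i - T ≤ Tv i - (T - τ) := by linarith [hτ.1]
    rw [abs_div, abs_of_pos h1, abs_of_neg (by linarith [hetav i] : etaFv i - etaSv i < 0),
      neg_sub]
    calc (etaSv i - etaFv i) / (Tv i - (T - τ))
        ≤ (etaSv i - etaFv i) / (Tv i - T) := by
          apply div_le_div_of_nonneg_left (by linarith [hetav i]) h2 h3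
      _ ≤ BD := by
          rw [hBD]
          exact Finset.single_le_sum (f := fun k => (etaSv k - etaFv k) / (Tv k - T))
            (fun k _ => le_of_lt (div_pos (by linarith [hetav k]) (hTvT k)))
            (Finset.mem_univ i)
  have hDmnorm : ∀ τ ∈ Icc (0:ℝ) T, ‖Dm τ‖ ≤ BD := by
    intro τ hτ
    rw [hDmdiag τ, Matrix.norm_le_iff hBDpos.le]
    intro i j
    by_cases hij : i = j
    · subst hij
      rw [Matrix.diagonal_apply_eq, Real.norm_eq_abs]
      exact hBDterm τ hτ i
    · rw [Matrix.diagonal_apply_ne _ hij]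
      simpa using hBDpos.le
  have hDmdiagneg : ∀ τ ∈ Icc (0:ℝ) T, ∀ i,
      (etaFv i - etaSv i) / (Tv i - (T - τ)) ≤ 0 := fun τ hτ i =>
    div_nonpos_iff.mpr (Or.inr ⟨by linarith [hetav i], (hden τ hτ i).le⟩)
  -- bounds for eta
  obtain ⟨BE, hBE⟩ : ∃ BE : ℝ, BE = ∑ i, (|etaFv i| + |etaSv i|) / (Tv i - T) := ⟨_, rfl⟩
  have hBE0 : 0 ≤ BE := by
    rw [hBE]
    exact Finset.sum_nonneg fun i _ => div_nonneg (by positivity) (hTvT i).le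
  have hetanorm : ∀ τ ∈ Icc (0:ℝ) T, ‖eta (T - τ)‖ ≤ BE := by
    intro τ hτ
    rw [Matrix.norm_le_iff hBE0]
    have hterm : ∀ (i : Fin N) (v : ℝ), |v| ≤ |etaFv i| + |etaSv i| →
        ‖v / (Tv i - (T - τ))‖ ≤ BE := by
      intro i v hv
      rw [Real.norm_eq_abs, abs_div, abs_of_pos (hden τ hτ i)]
      have h1 : |v| / (Tv i - (T - τ)) ≤ (|etaFv i| + |etaSv i|) / (Tv i - T) :=
        div_le_div₀ (by positivity) hv (hTvT i) (by linarith [hτ.1])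
      refine h1.trans ?_
      rw [hBE]
      exact Finset.single_le_sum (f := fun k => (|etaFv k| + |etaSv k|) / (Tv k - T))
        (fun k _ => div_nonneg (by positivity) (hTvT k).le) (Finset.mem_univ i)
    intro r j
    rcases r with i | i
    · rw [heta, Matrix.fromRows_apply_inl, hetaF]
      by_cases hij : i = j
      · subst hij
        rw [Matrix.diagonal_apply_eq]
        exact hterm i _ (by simp [abs_nonneg, le_add_iff_nonneg_right])
      · rw [Matrix.diagonal_apply_ne _ hij]
        simpa using hBE0
    · rw [heta, Matrix.fromRows_apply_inr, hetaS]
      by_cases hij : i = j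
      · subst hij
        rw [Matrix.diagonal_apply_eq]
        exact hterm i _ (by simp [abs_nonneg, le_add_iff_nonneg_left])
      · rw [Matrix.diagonal_apply_ne _ hij]
        simpa using hBE0
  -- bound for Qm
  obtain ⟨BQ, hBQ⟩ : ∃ BQ : ℝ, BQ = (Fintype.card (Fin N ⊕ Fin N) : ℝ) *
      ((Fintype.card (Fin N ⊕ Fin N) : ℝ) * BE * ‖Sig⁻¹‖) * BE := ⟨_, rfl⟩
  have hBQ0 : 0 ≤ BQ := by rw [hBQ]; positivity
  have hQmnorm : ∀ τ ∈ Icc (0:ℝ) T, ‖Qm τ‖ ≤ BQ := by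
    intro τ hτ
    rw [hQm]
    have h1 : ‖(eta (T - τ))ᵀ * Sig⁻¹‖
        ≤ (Fintype.card (Fin N ⊕ Fin N) : ℝ) * BE * ‖Sig⁻¹‖ := by
      calc ‖(eta (T - τ))ᵀ * Sig⁻¹‖
          ≤ (Fintype.card (Fin N ⊕ Fin N) : ℝ) * ‖(eta (T - τ))ᵀ‖ * ‖Sig⁻¹‖ :=
            RicAux.norm_mul_le_card _ _
        _ ≤ (Fintype.card (Fin N ⊕ Fin N) : ℝ) * BE * ‖Sig⁻¹‖ := by
            apply mul_le_mul_of_nonneg_right _ (norm_nonneg _)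
            rw [Matrix.norm_transpose]
            exact mul_le_mul_of_nonneg_left (hetanorm τ hτ) (Nat.cast_nonneg _)
    calc ‖(eta (T - τ))ᵀ * Sig⁻¹ * eta (T - τ)‖
        ≤ (Fintype.card (Fin N ⊕ Fin N) : ℝ) * ‖(eta (T - τ))ᵀ * Sig⁻¹‖ * ‖eta (T - τ)‖ :=
          RicAux.norm_mul_le_card _ _
      _ ≤ BQ := by
          rw [hBQ]
          apply mul_le_mul _ (hetanorm τ hτ) (norm_nonneg _) (by positivity)
          exact mul_le_mul_of_nonneg_left h1 (Nat.cast_nonneg _)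
  obtain ⟨K0, hK0v⟩ : ∃ K0 : ℝ, K0 = (Fintype.card (Fin N) : ℝ) * BQ := ⟨_, rfl⟩
  have hK00 : 0 ≤ K0 := by rw [hK0v]; positivity
  have htrQm : ∀ τ ∈ Icc (0:ℝ) T, (Qm τ).trace ≤ K0 := by
    intro τ hτ
    rw [hK0v]
    exact (RicAux.trace_le_card_norm _).trans
      (mul_le_mul_of_nonneg_left (hQmnorm τ hτ) (Nat.cast_nonneg _))
  obtain ⟨M0, hM0v⟩ : ∃ M0 : ℝ, M0 = c0 * K0 * T := ⟨_, rfl⟩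
  have hM00 : 0 ≤ M0 := by rw [hM0v]; positivity
  obtain ⟨R, hRv⟩ : ∃ R : ℝ, R = M0 + 1 := ⟨_, rfl⟩
  have hR0 : 0 < R := by rw [hRv]; linarith
  have hM0R : M0 < R := by rw [hRv]; linarith
  -- positive definiteness of Qm
  have hinj : ∀ τ ∈ Icc (0:ℝ) T, ∀ x : Fin N → ℝ, eta (T - τ) *ᵥ x = 0 → x = 0 := by
    intro τ hτ x hx
    funext i
    rw [heta, Matrix.fromRows_mulVec] at hx
    have h1 := congrFun hx (Sum.inl i)
    have h2 := congrFun hx (Sum.inr i)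
    simp only [Sum.elim_inl, Sum.elim_inr, Pi.zero_apply, hetaF, hetaS,
      Matrix.mulVec_diagonal] at h1 h2
    by_contra hxi
    have hd := (hden τ hτ i).ne'
    have hF : etaFv i = 0 := by
      rcases mul_eq_zero.mp h1 with h | h
      · rcases div_eq_zero_iff.mp h with h' | h'
        · exact h'
        · exact absurd h' hd
      · exact absurd h hxi
    have hS : etaSv i = 0 := by
      rcases mul_eq_zero.mp h2 with h | h
      · rcases div_eq_zero_iff.mp h with h' | h'
        · exact h'
        · exact absurd h' hd
      · exact absurd h hxi
    have := hetav i
    rw [hF, hS] at this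
    exact lt_irrefl 0 this
  have hQmpd : ∀ τ ∈ Icc (0:ℝ) T, (Qm τ).PosDef := by
    intro τ hτ
    rw [RicAux.posDef_iff]
    refine ⟨RicAux.hermitian_of_transpose_eq_self (hQmT τ), fun x hx => ?_⟩
    have key : x ⬝ᵥ (Qm τ *ᵥ x)
        = (eta (T - τ) *ᵥ x) ⬝ᵥ (Sig⁻¹ *ᵥ (eta (T - τ) *ᵥ x)) := by
      rw [hQm, ← Matrix.mulVec_mulVec, ← Matrix.mulVec_mulVec, Matrix.dotProduct_mulVec x,
        Matrix.vecMul_transpose]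
    rw [key]
    have hx' : eta (T - τ) *ᵥ x ≠ 0 := fun h0 => hx (hinj τ hτ x h0)
    exact (RicAux.posDef_iff.mp hSiginv).2 _ hx'
  -- continuity of the coefficients
  have hetaRc : Continuous (fun p : Icc (0:ℝ) T => eta (T - p.1)) := by
    apply continuous_matrix
    intro r j
    have hdenc : ∀ i : Fin N, Continuous (fun p : Icc (0:ℝ) T => Tv i - (T - p.1)) :=
      fun i => continuous_const.sub (continuous_const.sub continuous_subtype_val)
    have hdiagc : ∀ (w : Fin N → ℝ) (i : Fin N),
        Continuous (fun p : Icc (0:ℝ) T =>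
          Matrix.diagonal (fun k => w k / (Tv k - (T - p.1))) i j) := by
      intro w i
      by_cases hij : i = j
      · subst hij
        simp only [Matrix.diagonal_apply_eq]
        exact continuous_const.div (hdenc i) (fun p => (hden p.1 p.2 i).ne')
      · simp only [Matrix.diagonal_apply_ne _ hij]
        exact continuous_const
    rcases r with i | i
    · have hfun : (fun p : Icc (0:ℝ) T => eta (T - p.1) (Sum.inl i) j)
          = fun p => Matrix.diagonal (fun k => etaFv k / (Tv k - (T - p.1))) i j := by
        funext p
        rw [heta, Matrix.fromRows_apply_inl, hetaF]
      rw [hfun]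
      exact hdiagc etaFv i
    · have hfun : (fun p : Icc (0:ℝ) T => eta (T - p.1) (Sum.inr i) j)
          = fun p => Matrix.diagonal (fun k => etaSv k / (Tv k - (T - p.1))) i j := by
        funext p
        rw [heta, Matrix.fromRows_apply_inr, hetaS]
      rw [hfun]
      exact hdiagc etaSv i
  have hDmRc : Continuous (fun p : Icc (0:ℝ) T => Dm p.1) := by
    have hfun : (fun p : Icc (0:ℝ) T => Dm p.1) = fun p => (eta (T - p.1))ᵀ * C := by
      funext p; rw [hDm]
    rw [hfun]
    exact hetaRc.matrix_transpose.matrix_mul continuous_const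
  have hQmRc : Continuous (fun p : Icc (0:ℝ) T => Qm p.1) := by
    have hfun : (fun p : Icc (0:ℝ) T => Qm p.1)
        = fun p => (eta (T - p.1))ᵀ * Sig⁻¹ * eta (T - p.1) := by
      funext p; rw [hQm]
    rw [hfun]
    exact (hetaRc.matrix_transpose.matrix_mul continuous_const).matrix_mul hetaRc
  -- the cutoff Riccati vector field
  obtain ⟨vf, hvf⟩ : ∃ vf : ℝ → Matrix (Fin N) (Fin N) ℝ → Matrix (Fin N) (Fin N) ℝ,
      ∀ τ X, vf τ X = c0 • Qm τ + γ⁻¹ • (Dm τ * RicAux.rad R X + RicAux.rad R X * Dm τ)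
        - RicAux.rad R X * A * RicAux.rad R X := ⟨_, fun _ _ => rfl⟩
  obtain ⟨Lest, hLest⟩ : ∃ L : ℝ, L = 2 * (γ⁻¹ * (2 * (Fintype.card (Fin N) : ℝ) * BD)
      + 2 * (Fintype.card (Fin N) : ℝ) ^ 2 * ‖A‖ * R) := ⟨_, rfl⟩
  have hLest0 : 0 ≤ Lest := by rw [hLest]; positivity
  have hlip : ∀ τ ∈ Icc (0:ℝ) T, ∀ X Y, ‖vf τ X - vf τ Y‖ ≤ Lest * ‖X - Y‖ := by
    intro τ hτ X Y
    rw [hvf, hvf]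
    have h1 := RicAux.field_diff_bound (γi := γ⁻¹) (c0 := c0) hγi0 (Qm τ) (Dm τ) A
      (hDmnorm τ hτ) hBDpos.le (RicAux.norm_rad_le hR0 X) (RicAux.norm_rad_le hR0 Y) hR0.le
    refine h1.trans ?_
    rw [hLest]
    have h2 := RicAux.norm_rad_sub_rad_le hR0 X Y
    have hc : 0 ≤ γ⁻¹ * (2 * (Fintype.card (Fin N) : ℝ) * BD)
        + 2 * (Fintype.card (Fin N) : ℝ) ^ 2 * ‖A‖ * R := by positivity
    calc (γ⁻¹ * (2 * (Fintype.card (Fin N) : ℝ) * BD)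
          + 2 * (Fintype.card (Fin N) : ℝ) ^ 2 * ‖A‖ * R)
            * ‖RicAux.rad R X - RicAux.rad R Y‖
        ≤ (γ⁻¹ * (2 * (Fintype.card (Fin N) : ℝ) * BD)
          + 2 * (Fintype.card (Fin N) : ℝ) ^ 2 * ‖A‖ * R) * (2 * ‖X - Y‖) :=
          mul_le_mul_of_nonneg_left h2 hc
      _ = 2 * (γ⁻¹ * (2 * (Fintype.card (Fin N) : ℝ) * BD)
          + 2 * (Fintype.card (Fin N) : ℝ) ^ 2 * ‖A‖ * R) * ‖X - Y‖ := by ring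
  obtain ⟨Cb, hCb⟩ : ∃ Cb : ℝ, Cb = c0 * BQ
      + γ⁻¹ * (2 * (Fintype.card (Fin N) : ℝ) * BD * R)
      + (Fintype.card (Fin N) : ℝ) ^ 2 * ‖A‖ * R ^ 2 := ⟨_, rfl⟩
  have hCb0 : 0 ≤ Cb := by rw [hCb]; positivity
  have hbnd : ∀ τ ∈ Icc (0:ℝ) T, ∀ X, ‖vf τ X‖ ≤ Cb := by
    intro τ hτ X
    rw [hvf, hCb]
    exact RicAux.field_norm_bound hγi0 hc0pos.le (hQmnorm τ hτ) (hDmnorm τ hτ)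
      (RicAux.norm_rad_le hR0 X) hBDpos.le hR0.le
  -- Picard–Lindelöf existence
  have hpl : IsPicardLindelof vf (tmin := 0) (tmax := T) ⟨0, left_mem_Icc.mpr hT.le⟩ 0
      (Real.toNNReal (Cb * T + 1)) 0 (Real.toNNReal Cb) (Real.toNNReal Lest) := by
    refine ⟨?_, ?_, ?_, ?_⟩
    · intro t ht
      apply LipschitzOnWith.of_dist_le_mul
      intro X _ Y _
      rw [dist_eq_norm, dist_eq_norm, Real.coe_toNNReal _ hLest0]
      exact hlip t ht X Y
    · intro X _
      rw [continuousOn_iff_continuous_restrict]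
      have hfun : (Icc (0:ℝ) T).domRestrict (fun t => vf t X) = fun p : Icc (0:ℝ) T =>
          c0 • Qm p.1 + γ⁻¹ • (Dm p.1 * RicAux.rad R X + RicAux.rad R X * Dm p.1)
            - RicAux.rad R X * A * RicAux.rad R X := by
        funext p; exact hvf p.1 X
      rw [hfun]
      exact ((hQmRc.const_smul c0).add (((hDmRc.matrix_mul continuous_const).add
        (continuous_const.matrix_mul hDmRc)).const_smul γ⁻¹)).sub continuous_const
    · intro t ht X _
      rw [Real.coe_toNNReal _ hCb0]
      exact hbnd t ht X
    · show (Real.toNNReal Cb : ℝ) * max (T - 0) (0 - 0)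
        ≤ (Real.toNNReal (Cb * T + 1) : ℝ) - ((0 : ℝ≥0) : ℝ)
      rw [Real.coe_toNNReal _ hCb0, Real.coe_toNNReal _ (by positivity), NNReal.coe_zero]
      have hmax : max (T - 0) (0 - 0) = T := by
        rw [sub_zero, sub_self]
        exact max_eq_left hT.le
      rw [hmax]
      linarith [mul_nonneg hCb0 hT.le]
  obtain ⟨H, hH0', hHd⟩ := hpl.exists_eq_forall_mem_Icc_hasDerivWithinAt₀
  have hH0 : H 0 = 0 := hH0'
  have hHcont : ContinuousOn H (Icc 0 T) := fun τ ht => (hHd τ ht).continuousWithinAt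
  -- uniqueness for the cutoff field
  obtain ⟨wf, hwf⟩ : ∃ wf : ℝ → Matrix (Fin N) (Fin N) ℝ → Matrix (Fin N) (Fin N) ℝ,
      ∀ t X, wf t X = if t ∈ Icc (0:ℝ) T then vf t X else 0 := ⟨_, fun _ _ => rfl⟩
  have hwlip : ∀ t, LipschitzOnWith (Real.toNNReal Lest) (wf t) univ := by
    intro t
    apply LipschitzOnWith.of_dist_le_mul
    intro X _ Y _
    rw [dist_eq_norm, Real.coe_toNNReal _ hLest0]
    by_cases ht : t ∈ Icc (0:ℝ) T
    · rw [hwf, hwf, if_pos ht, if_pos ht]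
      exact hlip t ht X Y
    · rw [hwf, hwf, if_neg ht, if_neg ht, sub_self]
      have : (0:ℝ) ≤ Lest * dist X Y := mul_nonneg hLest0 dist_nonneg
      simpa using this
  have huniq : ∀ F G : ℝ → Matrix (Fin N) (Fin N) ℝ,
      ContinuousOn F (Icc 0 T) → ContinuousOn G (Icc 0 T) →
      (∀ t ∈ Icc (0:ℝ) T, HasDerivWithinAt F (vf t (F t)) (Icc 0 T) t) →
      (∀ t ∈ Icc (0:ℝ) T, HasDerivWithinAt G (vf t (G t)) (Icc 0 T) t) →
      F 0 = G 0 → EqOn F G (Icc 0 T) := by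
    intro F G hFc hGc hFd hGd h0
    apply ODE_solution_unique_of_mem_Icc_right (v := wf) (s := fun _ => univ) (fun t _ => hwlip t) hFc ?_
      (fun t _ => mem_univ _) hGc ?_ (fun t _ => mem_univ _) h0
    · intro t ht
      have h1 := RicAux.hasDerivWithinAt_Ici_of_Icc ht (hFd t (Ico_subset_Icc_self ht))
      rw [hwf, if_pos (Ico_subset_Icc_self ht)]
      exact h1
    · intro t ht
      have h1 := RicAux.hasDerivWithinAt_Ici_of_Icc ht (hGd t (Ico_subset_Icc_self ht))
      rw [hwf, if_pos (Ico_subset_Icc_self ht)]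
      exact h1
  -- symmetry
  obtain ⟨Ltr, hLtr⟩ : ∃ L : Matrix (Fin N) (Fin N) ℝ →ₗ[ℝ] Matrix (Fin N) (Fin N) ℝ,
      ∀ M, L M = Mᵀ :=
    ⟨{ toFun := fun M => Mᵀ
       map_add' := fun a b => Matrix.transpose_add a b
       map_smul' := fun c a => Matrix.transpose_smul c a }, fun _ => rfl⟩
  have hvfT : ∀ t (X : Matrix (Fin N) (Fin N) ℝ), (vf t X)ᵀ = vf t Xᵀ := by
    intro t X
    rw [hvf, hvf]
    simp only [Matrix.transpose_sub, Matrix.transpose_add, Matrix.transpose_smul,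
      Matrix.transpose_mul, Matrix.transpose_transpose, hQmT, hDmT, hAT,
      RicAux.rad_transpose, Matrix.mul_assoc]
    rw [add_comm (RicAux.rad R Xᵀ * Dm t) (Dm t * RicAux.rad R Xᵀ)]
  have hHTc : ContinuousOn (fun τ => (H τ)ᵀ) (Icc 0 T) := by
    rw [continuousOn_iff_continuous_restrict] at hHcont ⊢
    exact hHcont.matrix_transpose
  have hHdT : ∀ t ∈ Icc (0:ℝ) T,
      HasDerivWithinAt (fun τ => (H τ)ᵀ) (vf t ((H t)ᵀ)) (Icc 0 T) t := by
    intro t ht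
    have h1 := RicAux.hasDerivWithinAt_comp_linear Ltr (hHd t ht)
    simp only [hLtr] at h1
    rwa [hvfT] at h1
  have hsymm : ∀ τ ∈ Icc (0:ℝ) T, (H τ)ᵀ = H τ :=
    fun τ ht => huniq _ _ hHTc hHcont hHdT hHd (by rw [hH0, Matrix.transpose_zero]) ht
  -- the field at time 0
  have hvf00 : vf 0 (0 : Matrix (Fin N) (Fin N) ℝ) = c0 • Qm 0 := by
    rw [hvf]
    have hr0 : RicAux.rad R (0 : Matrix (Fin N) (Fin N) ℝ) = 0 := by
      rw [RicAux.rad, smul_zero]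
    rw [hr0]
    simp
  have hQm0pd : (Qm 0).PosDef := hQmpd 0 (left_mem_Icc.mpr hT.le)
  obtain ⟨μ, hμv⟩ : ∃ μ : ℝ, μ = RicAux.minForm (Qm 0) := ⟨_, rfl⟩
  have hμ : 0 < μ := hμv ▸ RicAux.minForm_pos_of_posDef hQm0pd
  have hqfsmul : ∀ (c : ℝ) (M : Matrix (Fin N) (Fin N) ℝ) (z : Fin N → ℝ),
      RicAux.qf (c • M) z = c * RicAux.qf M z := by
    intro c M z
    rw [RicAux.qf, RicAux.qf, Matrix.smul_mulVec, dotProduct_smul, smul_eq_mul]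
  -- small-time positivity
  have hlow : ∃ δ > (0:ℝ), ∀ τ, 0 < τ → τ ≤ δ → τ ≤ T → ∀ z : Fin N → ℝ, ‖z‖ = 1 →
      0 < RicAux.qf (H τ) z := by
    have hd0 := hHd 0 (left_mem_Icc.mpr hT.le)
    rw [hasDerivWithinAt_iff_isLittleO] at hd0
    obtain ⟨ε, hεv⟩ : ∃ ε : ℝ,
        ε = c0 * μ / (2 * ((Fintype.card (Fin N) : ℝ) ^ 2 + 1)) := ⟨_, rfl⟩
    have hε : 0 < ε := by rw [hεv]; positivity
    have hev := hd0.def hε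
    rw [Filter.eventually_iff, Metric.mem_nhdsWithin_iff] at hev
    obtain ⟨δ, hδ0, hδ⟩ := hev
    refine ⟨δ/2, by positivity, ?_⟩
    intro τ hτ0 hτδ hτT z hz
    have hτmem : τ ∈ Metric.ball (0:ℝ) δ ∩ Icc 0 T := by
      constructor
      · rw [Metric.mem_ball, Real.dist_eq, sub_zero, abs_of_pos hτ0]
        linarith
      · exact ⟨hτ0.le, hτT⟩
    have hsmall := hδ hτmem
    simp only [mem_setOf_eq, hH0, hvf00, sub_zero] at hsmall
    rw [Real.norm_eq_abs, abs_of_pos hτ0] at hsmall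
    have h1 := RicAux.qf_sub (H τ) (τ • (c0 • Qm 0)) z
    have h2 : RicAux.qf (τ • (c0 • Qm 0)) z = τ * (c0 * RicAux.qf (Qm 0) z) := by
      rw [hqfsmul, hqfsmul]
    have h3 : |RicAux.qf (H τ - τ • (c0 • Qm 0)) z|
        ≤ (Fintype.card (Fin N) : ℝ) ^ 2 * (ε * τ) :=
      (RicAux.abs_qf_le _ hz.le).trans (mul_le_mul_of_nonneg_left hsmall (by positivity))
    have h4 : c0 * μ ≤ c0 * RicAux.qf (Qm 0) z :=
      mul_le_mul_of_nonneg_left (hμv ▸ RicAux.minForm_le _ hz) hc0pos.le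
    have hineq : (Fintype.card (Fin N) : ℝ) ^ 2 * ε ≤ c0 * μ / 2 := by
      rw [hεv, ← mul_div_assoc, div_le_div_iff₀ (by positivity) (by positivity)]
      nlinarith [mul_nonneg hc0pos.le hμ.le, sq_nonneg ((Fintype.card (Fin N) : ℝ))]
    have h3l := (abs_le.mp h3).1
    have m1 := mul_le_mul_of_nonneg_left h4 hτ0.le
    have m2 := mul_le_mul_of_nonneg_right hineq hτ0.le
    nlinarith [mul_pos hτ0 (mul_pos hc0pos hμ)]
  obtain ⟨δ, hδ0, hδ⟩ := hlow
  have hmc : ContinuousOn (fun τ => RicAux.minForm (H τ)) (Icc 0 T) :=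
    RicAux.minForm_lipschitz.continuous.comp_continuousOn hHcont
  have hminpos : ∀ τ ∈ Ioc (0:ℝ) T, 0 < RicAux.minForm (H τ) := by
    by_contra hcon
    push_neg at hcon
    obtain ⟨τ₀, hτ₀, hτ₀m⟩ := hcon
    obtain ⟨δ', hδ'0, hδ'T, hδ'δ⟩ : ∃ δ', 0 < δ' ∧ δ' ≤ T ∧ δ' ≤ δ :=
      ⟨min δ T, lt_min hδ0 hT, min_le_right _ _, min_le_left _ _⟩
    have hlow' : ∀ σ, 0 < σ → σ ≤ T → σ < δ' → 0 < RicAux.minForm (H σ) := by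
      intro σ h1 hT' h2
      obtain ⟨z, hz, hzq⟩ := RicAux.minForm_attained (H σ)
      rw [hzq]
      exact hδ σ h1 (by linarith) hT' z hz
    have hbadne : (Icc δ' T ∩ (fun τ => RicAux.minForm (H τ)) ⁻¹' Iic 0).Nonempty := by
      refine ⟨τ₀, ⟨?_, hτ₀.2⟩, hτ₀m⟩
      by_contra hlt
      push_neg at hlt
      exact absurd hτ₀m (not_le.mpr (hlow' τ₀ hτ₀.1 hτ₀.2 hlt))
    have hbadclosed : IsClosed (Icc δ' T ∩ (fun τ => RicAux.minForm (H τ)) ⁻¹' Iic 0) :=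
      ContinuousOn.preimage_isClosed_of_isClosed
        (hmc.mono (Icc_subset_Icc (by linarith) le_rfl)) isClosed_Icc isClosed_Iic
    have hbadbdd : BddBelow (Icc δ' T ∩ (fun τ => RicAux.minForm (H τ)) ⁻¹' Iic 0) :=
      ⟨δ', fun x hx => hx.1.1⟩
    obtain ⟨τs, hτsv⟩ : ∃ τs, τs = sInf (Icc δ' T ∩
        (fun τ => RicAux.minForm (H τ)) ⁻¹' Iic 0) := ⟨_, rfl⟩
    have hτsbad : τs ∈ Icc δ' T ∩ (fun τ => RicAux.minForm (H τ)) ⁻¹' Iic 0 := by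
      rw [hτsv]; exact hbadclosed.csInf_mem hbadne hbadbdd
    have hτs0 : 0 < τs := lt_of_lt_of_le hδ'0 hτsbad.1.1
    have hτsT : τs ≤ T := hτsbad.1.2
    have hτsmem : τs ∈ Icc (0:ℝ) T := ⟨hτs0.le, hτsT⟩
    have hbefore : ∀ σ, 0 < σ → σ < τs → 0 < RicAux.minForm (H σ) := by
      intro σ h1 h2
      rcases lt_or_ge σ δ' with h3 | h3
      · exact hlow' σ h1 (by linarith) h3
      · by_contra h4
        push_neg at h4
        have hmem : σ ∈ Icc δ' T ∩ (fun τ => RicAux.minForm (H τ)) ⁻¹' Iic 0 :=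
          ⟨⟨h3, by linarith⟩, h4⟩
        have := csInf_le hbadbdd hmem
        rw [← hτsv] at this
        exact absurd this (not_le.mpr h2)
    have hm0 : RicAux.minForm (H τs) = 0 := by
      have hle : RicAux.minForm (H τs) ≤ 0 := hτsbad.2
      have hge : 0 ≤ RicAux.minForm (H τs) := by
        have hsub : Ioo (0:ℝ) τs ⊆ Icc 0 T :=
          fun x hx => ⟨hx.1.le, le_trans hx.2.le hτsT⟩
        have hcw : ContinuousWithinAt (fun τ => RicAux.minForm (H τ)) (Ioo 0 τs) τs :=
          ((hmc τs hτsmem).mono hsub)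
        haveI : (𝓝[Ioo (0:ℝ) τs] τs).NeBot := by
          rw [nhdsWithin_Ioo_eq_nhdsLT hτs0]
          infer_instance
        refine ge_of_tendsto hcw ?_
        filter_upwards [self_mem_nhdsWithin] with σ hσ
        exact (hbefore σ hσ.1 hσ.2).le
      linarith
    obtain ⟨z, hz, hzq⟩ := RicAux.minForm_attained (H τs)
    have hqz : RicAux.qf (H τs) z = 0 := by rw [← hzq, hm0]
    have hpsds : (H τs).PosSemidef := by
      apply RicAux.posSemidef_of_unit_qf (hsymm τs hτsmem)
      intro w hw
      have h5 := RicAux.minForm_le (H τs) hw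
      linarith [hm0 ▸ h5]
    have hker : H τs *ᵥ z = 0 := RicAux.mulVec_eq_zero_of_qf_eq_zero hpsds hqz
    have hfd : HasDerivWithinAt (fun σ => RicAux.qf (H σ) z)
        (RicAux.qf (vf τs (H τs)) z) (Icc 0 τs) τs := by
      have h1 := RicAux.hasDerivWithinAt_comp_linear (RicAux.qfLin z) (hHd τs hτsmem)
      simp only [RicAux.qfLin_apply] at h1
      exact h1.mono (Icc_subset_Icc le_rfl hτsT)
    have hfval : RicAux.qf (vf τs (H τs)) z = c0 * RicAux.qf (Qm τs) z := by
      rw [hvf]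
      exact RicAux.qf_field_eq _ _ _ hker (hsymm τs hτsmem)
    have hfpos : 0 < RicAux.qf (vf τs (H τs)) z := by
      rw [hfval]
      apply mul_pos hc0pos
      refine (RicAux.posDef_iff.mp (hQmpd τs hτsmem)).2 z ?_
      intro h0
      rw [h0] at hz
      simp at hz
    have hfle : RicAux.qf (vf τs (H τs)) z ≤ 0 := by
      apply RicAux.deriv_nonpos_at_right_min hτs0 hfd hqz
      intro σ hσ
      rcases eq_or_lt_of_le hσ.1 with h | h
      · rw [← h, hH0]
        simp [RicAux.qf]
      · rcases eq_or_lt_of_le hσ.2 with h2 | h2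
        · rw [h2, hqz]
        · have h6 := hbefore σ h h2
          have h7 := RicAux.minForm_le (H σ) hz
          linarith
    linarith
  have hpdIoc : ∀ τ ∈ Ioc (0:ℝ) T, (H τ).PosDef := by
    intro τ hτ
    apply RicAux.posDef_of_unit_qf (hsymm τ ⟨hτ.1.le, hτ.2⟩)
    intro z hz
    calc (0:ℝ) < RicAux.minForm (H τ) := hminpos τ hτ
      _ ≤ RicAux.qf (H τ) z := RicAux.minForm_le _ hz
  have hpsd : ∀ τ ∈ Icc (0:ℝ) T, (H τ).PosSemidef := by
    intro τ hτ
    rcases eq_or_lt_of_le hτ.1 with h | h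
    · rw [← h, hH0]
      exact Matrix.PosSemidef.zero
    · exact (hpdIoc τ ⟨h, hτ.2⟩).posSemidef
  -- a priori trace bound, removing the cutoff
  obtain ⟨Ltrace, hLtrace⟩ : ∃ L : Matrix (Fin N) (Fin N) ℝ →ₗ[ℝ] ℝ,
      ∀ M, L M = M.trace :=
    ⟨{ toFun := Matrix.trace
       map_add' := Matrix.trace_add
       map_smul' := Matrix.trace_smul }, fun _ => rfl⟩
  have htr : ∀ τ ∈ Icc (0:ℝ) T, (H τ).trace ≤ M0 := by
    have hsd : ∀ τ ∈ Icc (0:ℝ) T, HasDerivWithinAt (fun σ => (H σ).trace)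
        ((fun σ => (vf σ (H σ)).trace) τ) (Icc 0 T) τ := by
      intro τ hτ
      have h1 := RicAux.hasDerivWithinAt_comp_linear Ltrace (hHd τ hτ)
      simpa only [hLtrace] using h1
    have hdle : ∀ τ ∈ Icc (0:ℝ) T, (fun σ => (vf σ (H σ)).trace) τ ≤ c0 * K0 := by
      intro τ hτ
      simp only
      rw [hvf, hDmdiag τ]
      apply RicAux.trace_field_le (RicAux.rad_posSemidef hR0 (hpsd τ hτ)) ?_ hApsd
        (hDmdiagneg τ hτ) hγi0 (htrQm τ hτ) hc0pos.le
      rw [RicAux.rad_transpose, hsymm τ hτ]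
    intro τ hτ
    have h2 := RicAux.le_of_hasDerivWithinAt_le hT.le hsd hdle τ hτ
    rw [hH0, Matrix.trace_zero, sub_zero, zero_add] at h2
    rw [hM0v]
    calc (H τ).trace ≤ c0 * K0 * τ := h2
      _ ≤ c0 * K0 * T := mul_le_mul_of_nonneg_left hτ.2 (by positivity)
  have hradH : ∀ τ ∈ Icc (0:ℝ) T, RicAux.rad R (H τ) = H τ := by
    intro τ hτ
    apply RicAux.rad_eq_self hR0
    calc ‖H τ‖ ≤ (H τ).trace := RicAux.norm_le_trace_of_posSemidef (hpsd τ hτ)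
      _ ≤ M0 := htr τ hτ
      _ ≤ R := hM0R.le
  -- H solves the true Riccati equation
  have hHval : ∀ τ ∈ Icc (0:ℝ) T, vf τ (H τ)
      = c0 • Qm τ + γ⁻¹ • (Dm τ * H τ + H τ * Dm τ) - H τ * A * H τ := by
    intro τ hτ
    rw [hvf, hradH τ hτ]
  have hH'c : ContinuousOn (fun τ => vf τ (H τ)) (Icc 0 T) := by
    rw [continuousOn_iff_continuous_restrict]
    have hfun : (Icc (0:ℝ) T).domRestrict (fun τ => vf τ (H τ)) = fun p : Icc (0:ℝ) T =>
        c0 • Qm p.1 + γ⁻¹ • (Dm p.1 * RicAux.rad R (H p.1)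
          + RicAux.rad R (H p.1) * Dm p.1)
          - RicAux.rad R (H p.1) * A * RicAux.rad R (H p.1) := by
      funext p; exact hvf p.1 (H p.1)
    rw [hfun]
    have hHR : Continuous (fun p : Icc (0:ℝ) T => RicAux.rad R (H p.1)) :=
      (RicAux.rad_continuous hR0).comp (continuousOn_iff_continuous_restrict.mp hHcont)
    exact ((hQmRc.const_smul c0).add (((hDmRc.matrix_mul hHR).add
      (hHR.matrix_mul hDmRc)).const_smul γ⁻¹)).sub
      ((hHR.matrix_mul continuous_const).matrix_mul hHR)
  refine ⟨H, ⟨hH0, fun τ => vf τ (H τ), hH'c, ?_⟩, ?_, ?_, ?_⟩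
  · -- the equation holds
    intro τ hτ
    refine ⟨hHd τ hτ, ?_⟩
    simp only [hHval τ hτ, hCeta τ, ← hA, ← hc0, one_div, ← hDm, ← hQm]
    abel
  · -- uniqueness
    intro K hK
    obtain ⟨hK0, K', hK'c, hKprop⟩ := hK
    have hKd : ∀ τ ∈ Icc (0:ℝ) T, HasDerivWithinAt K (K' τ) (Icc 0 T) τ :=
      fun τ h => (hKprop τ h).1
    have hKcont : ContinuousOn K (Icc 0 T) := fun τ h => (hKd τ h).continuousWithinAt
    have hKval : ∀ τ ∈ Icc (0:ℝ) T, K' τ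
        = c0 • Qm τ + γ⁻¹ • (Dm τ * K τ + K τ * Dm τ) - K τ * A * K τ := by
      intro τ hτ
      have h := (hKprop τ hτ).2
      rw [hCeta τ, ← hA, ← hc0, one_div] at h
      rw [show (eta (T - τ))ᵀ * C = Dm τ from (hDm τ).symm] at h
      rw [show (eta (T - τ))ᵀ * Sig⁻¹ * eta (T - τ) = Qm τ from (hQm τ).symm] at h
      rw [← sub_eq_zero, ← h]
      abel
    -- a common bound for H and K on the interval
    obtain ⟨M1, hM1⟩ : ∃ M1 : ℝ, ∀ τ ∈ Icc (0:ℝ) T, ‖K τ‖ ≤ M1 ∧ ‖H τ‖ ≤ M1 := by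
      obtain ⟨a1, ha1m, ha1⟩ := isCompact_Icc.exists_isMaxOn
        (nonempty_Icc.mpr hT.le) hKcont.norm
      obtain ⟨a2, ha2m, ha2⟩ := isCompact_Icc.exists_isMaxOn
        (nonempty_Icc.mpr hT.le) hHcont.norm
      exact ⟨max ‖K a1‖ ‖H a2‖, fun τ hτ =>
        ⟨le_max_of_le_left (ha1 hτ), le_max_of_le_right (ha2 hτ)⟩⟩
    have hM10 : 0 ≤ M1 :=
      le_trans (norm_nonneg (K 0)) (hM1 0 (left_mem_Icc.mpr hT.le)).1
    obtain ⟨wt, hwt⟩ : ∃ wt : ℝ → Matrix (Fin N) (Fin N) ℝ → Matrix (Fin N) (Fin N) ℝ,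
        ∀ t X, wt t X = if t ∈ Icc (0:ℝ) T
          then c0 • Qm t + γ⁻¹ • (Dm t * X + X * Dm t) - X * A * X else 0 :=
      ⟨_, fun _ _ => rfl⟩
    obtain ⟨LU, hLU⟩ : ∃ LU : ℝ, LU = γ⁻¹ * (2 * (Fintype.card (Fin N) : ℝ) * BD)
        + 2 * (Fintype.card (Fin N) : ℝ) ^ 2 * ‖A‖ * M1 := ⟨_, rfl⟩
    have hLU0 : 0 ≤ LU := by rw [hLU]; positivity
    have hwtlip : ∀ t, LipschitzOnWith (Real.toNNReal LU) (wt t)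
        (Metric.closedBall 0 M1) := by
      intro t
      apply LipschitzOnWith.of_dist_le_mul
      intro X hX Y hY
      rw [dist_eq_norm, dist_eq_norm, Real.coe_toNNReal _ hLU0]
      by_cases ht : t ∈ Icc (0:ℝ) T
      · rw [hwt, hwt, if_pos ht, if_pos ht, hLU]
        exact RicAux.field_diff_bound hγi0 (Qm t) (Dm t) A (hDmnorm t ht) hBDpos.le
          (mem_closedBall_zero_iff.mp hX) (mem_closedBall_zero_iff.mp hY) hM10
      · rw [hwt, hwt, if_neg ht, if_neg ht, sub_self]
        simpa using mul_nonneg hLU0 (norm_nonneg (X - Y))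
    apply ODE_solution_unique_of_mem_Icc_right (v := wt)
      (s := fun _ => Metric.closedBall 0 M1) (fun t _ => hwtlip t) hKcont ?_ ?_ hHcont ?_ ?_
      (by rw [hK0, hH0])
    · intro t ht
      have h1 := RicAux.hasDerivWithinAt_Ici_of_Icc ht (hKd t (Ico_subset_Icc_self ht))
      rw [hwt, if_pos (Ico_subset_Icc_self ht), ← hKval t (Ico_subset_Icc_self ht)]
      exact h1
    · intro t ht
      exact mem_closedBall_zero_iff.mpr (hM1 t (Ico_subset_Icc_self ht)).1
    · intro t ht
      have h1 := RicAux.hasDerivWithinAt_Ici_of_Icc ht (hHd t (Ico_subset_Icc_self ht))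
      rw [hwt, if_pos (Ico_subset_Icc_self ht), ← hHval t (Ico_subset_Icc_self ht)]
      exact h1
    · intro t ht
      exact mem_closedBall_zero_iff.mpr (hM1 t (Ico_subset_Icc_self ht)).2
  · -- symmetry and positive semidefiniteness
    exact fun τ hτ => ⟨hsymm τ hτ, hpsd τ hτ⟩
  · -- positive definiteness
    exact hpdIoc
end

section
/- Let Σ̃ be a 2N×2N real matrix of the block lower-triangular form Σ̃ = [[Σ̃_F, 0],[Σ̃_SF, Σ̃_S]] with N×N blocks, such that Σ := Σ̃Σ̃ᵀ is positive definite (in particular Σ̃_F and Σ̃_S are invertible). Partition Σ into N×N blocks Σ = [[Σ_F, Σ_FS],[Σ_FSᵀ, Σ_S]], let C be the 2N×N matrix obtained by stacking I_N on top of −I_N, and set A := Σ_F + Σ_FSᵀΣ_F^{−1}Σ_FS − Σ_FS − Σ_FSᵀ. Then for every real γ > 1 the identity γ CᵀΣC + (1−γ)A = CᵀΣC + (γ−1) Σ̃_SΣ̃_Sᵀ holds, and the matrix γ CᵀΣC + (1−γ)A is symmetric positive definite. In particular, A = CᵀΣC − (Σ_S − Σ_FSᵀΣ_F^{−1}Σ_FS).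 -/
open Matrix

lemma posSemidef_smul_of_nonneg {n : Type*} [Fintype n] {M : Matrix n n ℝ}
    (hM : M.PosSemidef) {c : ℝ} (hc : 0 ≤ c) : (c • M).PosSemidef := by
  refine PosSemidef.of_dotProduct_mulVec_nonneg (by rw [Matrix.IsHermitian, conjTranspose_smul, hM.1.eq, star_trivial]) fun x => ?_
  rw [smul_mulVec, dotProduct_smul]
  exact smul_nonneg hc (hM.dotProduct_mulVec_nonneg x)

lemma posdef_conj_of_injective {n m : Type*} [Fintype n] [Fintype m] [DecidableEq n]
    {M : Matrix n n ℝ} (hM : M.PosDef) (B : Matrix n m ℝ)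
    (hB : ∀ x : m → ℝ, x ≠ 0 → B *ᵥ x ≠ 0) : (Bᵀ * M * B).PosDef := by
  refine PosDef.of_dotProduct_mulVec_pos ?_ ?_
  · have := isHermitian_conjTranspose_mul_mul B hM.1
    simpa using this
  · intro x hx
    have key : star x ⬝ᵥ ((Bᵀ * M * B) *ᵥ x) = star (B *ᵥ x) ⬝ᵥ (M *ᵥ (B *ᵥ x)) := by
      simp [star, ← mulVec_mulVec, dotProduct_mulVec, vecMul_transpose]
    rw [key]
    exact hM.dotProduct_mulVec_pos (hB x hx)

/-- The identity `γ CᵀΣC + (1−γ)A = CᵀΣC + (γ−1) Σ̃_S Σ̃_Sᵀ`, positive definiteness of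
`γ CᵀΣC + (1−γ)A`, and the identity `A = CᵀΣC − (Σ_S − Σ_FSᵀΣ_F⁻¹Σ_FS)`. -/
theorem posdef_gamma_combination
    (N : ℕ) (hN : 0 < N)
    (StF StSF StS : Matrix (Fin N) (Fin N) ℝ)
    (Stil : Matrix (Fin N ⊕ Fin N) (Fin N ⊕ Fin N) ℝ)
    (hStil : Stil = Matrix.fromBlocks StF 0 StSF StS)
    (Sig : Matrix (Fin N ⊕ Fin N) (Fin N ⊕ Fin N) ℝ)
    (hSig : Sig = Stil * Stilᵀ)
    (hpd : Sig.PosDef)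
    (SF SFS SS : Matrix (Fin N) (Fin N) ℝ)
    (hSF : SF = Sig.toBlocks₁₁)
    (hSFS : SFS = Sig.toBlocks₁₂)
    (hSS : SS = Sig.toBlocks₂₂)
    (C : Matrix (Fin N ⊕ Fin N) (Fin N) ℝ)
    (hC : C = Matrix.fromRows 1 (-1))
    (A : Matrix (Fin N) (Fin N) ℝ)
    (hA : A = SF + SFSᵀ * SF⁻¹ * SFS - SFS - SFSᵀ)
    (γ : ℝ) (hγ : 1 < γ) :
    γ • (Cᵀ * Sig * C) + (1 - γ) • A = Cᵀ * Sig * C + (γ - 1) • (StS * StSᵀ) ∧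
    (γ • (Cᵀ * Sig * C) + (1 - γ) • A).PosDef ∧
    A = Cᵀ * Sig * C - (SS - SFSᵀ * SF⁻¹ * SFS) := by
  -- blocks of Sig
  have hSigBlocks : Sig = Matrix.fromBlocks (StF * StFᵀ) (StF * StSFᵀ)
      (StSF * StFᵀ) (StSF * StSFᵀ + StS * StSᵀ) := by
    rw [hSig, hStil, fromBlocks_transpose, fromBlocks_multiply]
    simp
  have hSF' : SF = StF * StFᵀ := by rw [hSF, hSigBlocks]; rfl
  have hSFS' : SFS = StF * StSFᵀ := by rw [hSFS, hSigBlocks]; rfl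
  have hSS' : SS = StSF * StSFᵀ + StS * StSᵀ := by rw [hSS, hSigBlocks]; rfl
  have hSFST : SFSᵀ = StSF * StFᵀ := by rw [hSFS']; simp [transpose_mul]
  -- invertibility of StF
  have hdetSig : Sig.det ≠ 0 := ne_of_gt hpd.det_pos
  have hdetStil : Stil.det ≠ 0 := by
    intro h
    rw [hSig, det_mul, det_transpose, h, mul_zero] at hdetSig
    exact hdetSig rfl
  have hdetStF : StF.det ≠ 0 := by
    intro h
    rw [hStil, det_fromBlocks_zero₁₂, h, zero_mul] at hdetStil
    exact hdetStil rfl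
  have hdetStS : StS.det ≠ 0 := by
    intro h
    rw [hStil, det_fromBlocks_zero₁₂, h, mul_zero] at hdetStil
    exact hdetStil rfl
  -- key simplification
  have hkey : SFSᵀ * SF⁻¹ * SFS = StSF * StSFᵀ := by
    rw [hSFST, hSFS', hSF', Matrix.mul_inv_rev]
    have h1 : StFᵀ * (StFᵀ)⁻¹ = 1 := Matrix.mul_nonsing_inv _ (by simpa using hdetStF.isUnit)
    have h2 : StF⁻¹ * StF = 1 := Matrix.nonsing_inv_mul _ hdetStF.isUnit
    calc StSF * StFᵀ * ((StFᵀ)⁻¹ * StF⁻¹) * (StF * StSFᵀ)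
        = StSF * ((StFᵀ * (StFᵀ)⁻¹) * ((StF⁻¹ * StF) * StSFᵀ)) := by
          simp only [Matrix.mul_assoc]
      _ = StSF * StSFᵀ := by rw [h1, h2]; simp
  -- CᵀΣC
  have hCSC : Cᵀ * Sig * C = SF + SS - SFS - SFSᵀ := by
    rw [hC, hSigBlocks, transpose_fromRows, fromCols_mul_fromBlocks,
      fromCols_mul_fromRows, hSF', hSFS', hSS']
    simp only [transpose_one, transpose_neg, transpose_mul, transpose_transpose,
      Matrix.one_mul, Matrix.neg_mul, Matrix.mul_one, Matrix.mul_neg, neg_neg, neg_add]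
    abel
  have hdiff : Cᵀ * Sig * C - A = StS * StSᵀ := by
    rw [hCSC, hA, hkey, hSS']
    abel
  have hthird : A = Cᵀ * Sig * C - (SS - SFSᵀ * SF⁻¹ * SFS) := by
    rw [hCSC, hA]; abel
  have hfirst : γ • (Cᵀ * Sig * C) + (1 - γ) • A
      = Cᵀ * Sig * C + (γ - 1) • (StS * StSᵀ) := by
    rw [← hdiff]
    module
  refine ⟨hfirst, ?_, hthird⟩
  rw [hfirst]
  have hCSCpd : (Cᵀ * Sig * C).PosDef := by
    refine posdef_conj_of_injective hpd C ?_
    intro x hx h0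
    apply hx
    rw [hC] at h0
    simp only [fromRows_mulVec, Matrix.one_mulVec] at h0
    funext i
    have := congrFun h0 (Sum.inl i)
    simpa using this
  have hsemi : ((γ - 1) • (StS * StSᵀ)).PosSemidef := by
    refine posSemidef_smul_of_nonneg ?_ (by linarith)
    have := Matrix.posSemidef_self_mul_conjTranspose StS
    simpa using this
  exact hCSCpd.add_posSemidef hsemi
end

section
/- Under the stated setup, let H : [0,T] → ℝ^{N×N} be a continuously differentiable symmetric-matrix-valued function with H(0) = 0 satisfying, for all τ ∈ [0,T], H'(τ) + H(τ)(γ CᵀΣC + (1−γ)A)H(τ) − L(τ)H(τ) − H(τ)L(τ)ᵀ − ((γ−1)/γ²) η_F(T−τ)ᵀΣ_F^{−1}η_F(T−τ) = 0, where L(τ) := η(T−τ)ᵀC + (1/γ−1)η_F(T−τ)ᵀB. Let g : [0,T] → ℝ^N be continuously differentiable with g(0) = 0 and g'(τ) = [ η(T−τ)ᵀC − γ H(τ)CᵀΣC − (1−γ)H(τ)A + (1/γ−1)η_F(T−τ)ᵀB ] g(τ) − H(τ)( m + (1/γ−1)Bᵀμ_F ) + ((1−γ)/γ²) η_F(T−τ)ᵀΣ_F^{−1}μ_F.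 Define f(τ) := ((1−γ)/γ)( r + μ_FᵀΣ_F^{−1}μ_F/(2γ) )τ + ∫_0^τ [ (1/2) g(u)ᵀ((1−γ)A + γ CᵀΣC)g(u) + ( m + (1/γ−1)Bᵀμ_F )ᵀ g(u) − (1/2) tr( CᵀΣC H(u) ) ] du, and define v(t,x,z) := (x^{1−γ}/(1−γ)) exp( γ( f(T−t) + zᵀg(T−t) − (1/2) zᵀH(T−t)z ) ) for (t,x,z) ∈ [0,T]×(0,∞)×ℝ^N. Then v(T,x,z) = x^{1−γ}/(1−γ), and at every (t,x,z) ∈ [0,T]×(0,∞)×ℝ^N the partial derivatives of v satisfy v_t + (m + Cᵀη(t)z)ᵀ v_z + (1/2) tr( CᵀΣC v_zz ) + r x v_x − (1/2)(μ_F + η_F(t)z)ᵀΣ_F^{−1}(μ_F + η_F(t)z) v_x²/v_xx − (1/(2 v_xx)) v_xzᵀ A v_xz − (v_x/v_xx) (μ_F + η_F(t)z)ᵀ B v_xz = 0, where v_z denotes the gradient of v in z, v_zz the Hessian in z, v_x and v_xx the first and second partial derivatives in x, and v_xz the gradient in z of v_x. -/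
open Matrix Set

attribute [local instance] Matrix.normedAddCommGroup Matrix.normedSpace


private lemma update_eq_add {n : ℕ} (z : Fin n → ℝ) (i : Fin n) (s : ℝ) :
    Function.update z i s = z + (s - z i) • (Pi.single i 1 : Fin n → ℝ) := by
  funext j
  rcases eq_or_ne j i with h | h
  · subst h; simp
  · simp [Function.update_apply, h, Pi.single_apply, h]

private lemma hasDerivAt_update_dot {n : ℕ} (z a : Fin n → ℝ) (i : Fin n) :
    HasDerivAt (fun s => Function.update z i s ⬝ᵥ a) (a i) (z i) := by
  have key : ∀ s, Function.update z i s ⬝ᵥ a = z ⬝ᵥ a + (s - z i) * a i := by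
    intro s
    rw [update_eq_add, add_dotProduct, smul_dotProduct, single_dotProduct]
    simp [smul_eq_mul]
  simp only [key]
  simpa using (hasDerivAt_const (z i) (z ⬝ᵥ a)).fun_add
    (((hasDerivAt_id (z i)).sub_const (z i)).mul_const (a i))

private lemma hasDerivAt_update_quad {n : ℕ} (M : Matrix (Fin n) (Fin n) ℝ)
    (z : Fin n → ℝ) (i : Fin n) :
    HasDerivAt (fun s => Function.update z i s ⬝ᵥ (M *ᵥ Function.update z i s))
      ((M *ᵥ z) i + (Mᵀ *ᵥ z) i) (z i) := by
  have e1 : Pi.single i (1:ℝ) ⬝ᵥ (M *ᵥ z) = (M *ᵥ z) i := by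
    rw [single_dotProduct]; ring
  have e2 : z ⬝ᵥ (M *ᵥ Pi.single i (1:ℝ)) = (Mᵀ *ᵥ z) i := by
    rw [Matrix.mulVec_single]
    simp [dotProduct, Matrix.mulVec, Matrix.transpose_apply, mul_comm]
  have e3 : Pi.single i (1:ℝ) ⬝ᵥ (M *ᵥ Pi.single i (1:ℝ)) = M i i := by
    rw [Matrix.mulVec_single, single_dotProduct]; simp
  have key : ∀ s, Function.update z i s ⬝ᵥ (M *ᵥ Function.update z i s)
      = z ⬝ᵥ (M *ᵥ z) + (s - z i) * ((M *ᵥ z) i + (Mᵀ *ᵥ z) i)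
        + (s - z i)^2 * M i i := by
    intro s
    rw [update_eq_add]
    simp only [Matrix.mulVec_add, Matrix.mulVec_smul, add_dotProduct, smul_dotProduct,
      dotProduct_add, dotProduct_smul, smul_eq_mul, e1, e2, e3]
    ring
  simp only [key]
  have h1 : HasDerivAt (fun s : ℝ => s - z i) 1 (z i) := (hasDerivAt_id _).sub_const _
  have := ((hasDerivAt_const (z i) (z ⬝ᵥ (M *ᵥ z))).fun_add
      (h1.mul_const ((M *ᵥ z) i + (Mᵀ *ᵥ z) i))).fun_add
      ((h1.fun_pow 2).mul_const (M i i))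
  simpa using this


private lemma continuous_dot_const {n : ℕ} (a : Fin n → ℝ) :
    Continuous fun w : Fin n → ℝ => a ⬝ᵥ w := by
  simp only [dotProduct]
  exact continuous_finset_sum _ fun i _ => continuous_const.mul (continuous_apply i)

private lemma continuous_quad {n : ℕ} (M : Matrix (Fin n) (Fin n) ℝ) :
    Continuous fun w : Fin n → ℝ => w ⬝ᵥ (M *ᵥ w) := by
  simp only [dotProduct, Matrix.mulVec]
  exact continuous_finset_sum _ fun i _ => (continuous_apply i).mul
    (continuous_finset_sum _ fun j _ => continuous_const.mul (continuous_apply j))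

private lemma continuous_trace_mul {n : ℕ} (K : Matrix (Fin n) (Fin n) ℝ) :
    Continuous fun X : Matrix (Fin n) (Fin n) ℝ => Matrix.trace (K * X) := by
  simp only [Matrix.trace, Matrix.diag, Matrix.mul_apply]
  exact continuous_finset_sum _ fun i _ => continuous_finset_sum _ fun j _ =>
    continuous_const.mul ((continuous_apply i).comp (continuous_apply j))

private lemma trace_mul_vecMulVec {n : ℕ} (K : Matrix (Fin n) (Fin n) ℝ) (a b : Fin n → ℝ) :
    Matrix.trace (K * Matrix.vecMulVec a b) = b ⬝ᵥ (K *ᵥ a) := by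
  simp only [Matrix.trace, Matrix.diag, Matrix.mul_apply, Matrix.vecMulVec_apply,
    dotProduct, Matrix.mulVec, Finset.mul_sum]
  exact Finset.sum_congr rfl fun i _ => Finset.sum_congr rfl fun j _ => by ring

private lemma dot_mulVec_left {m n : ℕ} (X : Matrix (Fin m) (Fin n) ℝ)
    (a : Fin n → ℝ) (w : Fin m → ℝ) : (X *ᵥ a) ⬝ᵥ w = a ⬝ᵥ (Xᵀ *ᵥ w) := by
  rw [Matrix.mulVec_transpose, dotProduct_comm, Matrix.dotProduct_mulVec, dotProduct_comm]


set_option maxHeartbeats 3200000 in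
/-- Verification core for the futures-only optimal trading problem: the
exponential-quadratic ansatz built from the solutions `H`, `g` of the Riccati system and
the integral `f` satisfies the terminal condition and the reduced HJB equation. -/
theorem hjb_verification_futures_only
    (N : ℕ) (hN : 0 < N)
    -- the covariance matrix and its blocks
    (SF SFS SS : Matrix (Fin N) (Fin N) ℝ)
    (Sig : Matrix (Fin N ⊕ Fin N) (Fin N ⊕ Fin N) ℝ)
    (hSigdef : Sig = Matrix.fromBlocks SF SFS SFSᵀ SS)
    (hSig : Sig.PosDef)
    -- the time horizon, maturities, and basis parameters
    (T : ℝ) (Tv : Fin N → ℝ) (hT : 0 < T) (hTv : ∀ i, T < Tv i)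
    (etaFv etaSv : Fin N → ℝ) (hetav : ∀ i, etaFv i < etaSv i)
    (γ r : ℝ) (hγ : 1 < γ)
    (m μF : Fin N → ℝ)
    (C : Matrix (Fin N ⊕ Fin N) (Fin N) ℝ) (hC : C = Matrix.fromRows 1 (-1))
    (etaF etaS : ℝ → Matrix (Fin N) (Fin N) ℝ)
    (hetaF : ∀ t, etaF t = Matrix.diagonal fun i => etaFv i / (Tv i - t))
    (hetaS : ∀ t, etaS t = Matrix.diagonal fun i => etaSv i / (Tv i - t))
    (eta : ℝ → Matrix (Fin N ⊕ Fin N) (Fin N) ℝ)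
    (heta : ∀ t, eta t = Matrix.fromRows (etaF t) (etaS t))
    (A B : Matrix (Fin N) (Fin N) ℝ)
    (hA : A = SF + SFSᵀ * SF⁻¹ * SFS - SFS - SFSᵀ)
    (hB : B = 1 - SF⁻¹ * SFS)
    (L : ℝ → Matrix (Fin N) (Fin N) ℝ)
    (hL : ∀ τ, L τ = (eta (T - τ))ᵀ * C + (1/γ - 1) • ((etaF (T - τ))ᵀ * B))
    -- the function `H`: C¹ symmetric solution of the Riccati equation with `H(0) = 0`
    (H H' : ℝ → Matrix (Fin N) (Fin N) ℝ)
    (hHderiv : ∀ τ ∈ Icc 0 T, HasDerivWithinAt H (H' τ) (Icc 0 T) τ)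
    (hH'cont : ContinuousOn H' (Icc 0 T))
    (hHsymm : ∀ τ ∈ Icc 0 T, (H τ).IsSymm)
    (hH0 : H 0 = 0)
    (hHric : ∀ τ ∈ Icc 0 T,
      H' τ + H τ * (γ • (Cᵀ * Sig * C) + (1 - γ) • A) * H τ
        - L τ * H τ - H τ * (L τ)ᵀ
        - ((γ - 1)/γ^2) • ((etaF (T - τ))ᵀ * SF⁻¹ * etaF (T - τ)) = 0)
    -- the function `g`: C¹ solution of the linear ODE with `g(0) = 0`
    (g g' : ℝ → (Fin N → ℝ))
    (hgderiv : ∀ τ ∈ Icc 0 T, HasDerivWithinAt g (g' τ) (Icc 0 T) τ)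
    (hg'cont : ContinuousOn g' (Icc 0 T))
    (hg0 : g 0 = 0)
    (hgode : ∀ τ ∈ Icc 0 T,
      g' τ = ((eta (T - τ))ᵀ * C - γ • (H τ * (Cᵀ * Sig * C)) - (1 - γ) • (H τ * A)
            + (1/γ - 1) • ((etaF (T - τ))ᵀ * B)) *ᵥ g τ
          - H τ *ᵥ (m + (1/γ - 1) • (Bᵀ *ᵥ μF))
          + ((1 - γ)/γ^2) • (((etaF (T - τ))ᵀ * SF⁻¹) *ᵥ μF))
    -- the function `f`
    (f : ℝ → ℝ)
    (hf : ∀ τ, f τ =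
      (1 - γ)/γ * (r + (μF ⬝ᵥ (SF⁻¹ *ᵥ μF))/(2*γ)) * τ
      + ∫ u in (0:ℝ)..τ,
          ((1/2) * (g u ⬝ᵥ (((1 - γ) • A + γ • (Cᵀ * Sig * C)) *ᵥ g u))
            + (m + (1/γ - 1) • (Bᵀ *ᵥ μF)) ⬝ᵥ g u
            - (1/2) * Matrix.trace (Cᵀ * Sig * C * H u)))
    -- the candidate value function
    (v : ℝ → ℝ → (Fin N → ℝ) → ℝ)
    (hv : ∀ t x z, v t x z =
      x ^ (1 - γ) / (1 - γ) *
        Real.exp (γ * (f (T - t) + z ⬝ᵥ g (T - t) - (1/2) * (z ⬝ᵥ (H (T - t) *ᵥ z)))))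
    -- its partial derivatives
    (vt vx vxx : ℝ → ℝ → (Fin N → ℝ) → ℝ)
    (vz vxz : ℝ → ℝ → (Fin N → ℝ) → (Fin N → ℝ))
    (vzz : ℝ → ℝ → (Fin N → ℝ) → Matrix (Fin N) (Fin N) ℝ)
    (hvt : ∀ t ∈ Icc 0 T, ∀ x ∈ Ioi (0:ℝ), ∀ z,
      HasDerivWithinAt (fun s => v s x z) (vt t x z) (Icc 0 T) t)
    (hvx : ∀ t ∈ Icc 0 T, ∀ x ∈ Ioi (0:ℝ), ∀ z,
      HasDerivAt (fun y => v t y z) (vx t x z) x)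
    (hvxx : ∀ t ∈ Icc 0 T, ∀ x ∈ Ioi (0:ℝ), ∀ z,
      HasDerivAt (fun y => vx t y z) (vxx t x z) x)
    (hvz : ∀ t ∈ Icc 0 T, ∀ x ∈ Ioi (0:ℝ), ∀ z, ∀ i,
      HasDerivAt (fun s => v t x (Function.update z i s)) (vz t x z i) (z i))
    (hvzz : ∀ t ∈ Icc 0 T, ∀ x ∈ Ioi (0:ℝ), ∀ z, ∀ i j,
      HasDerivAt (fun s => vz t x (Function.update z j s) i) (vzz t x z i j) (z j))
    (hvxz : ∀ t ∈ Icc 0 T, ∀ x ∈ Ioi (0:ℝ), ∀ z, ∀ i,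
      HasDerivAt (fun s => vx t x (Function.update z i s)) (vxz t x z i) (z i)) :
    -- terminal condition
    (∀ x : ℝ, 0 < x → ∀ z, v T x z = x ^ (1 - γ) / (1 - γ)) ∧
    -- the reduced HJB equation
    (∀ t ∈ Icc 0 T, ∀ x ∈ Ioi (0:ℝ), ∀ z,
      vt t x z
        + (m + ((Cᵀ * eta t) *ᵥ z)) ⬝ᵥ vz t x z
        + (1/2) * Matrix.trace (Cᵀ * Sig * C * vzz t x z)
        + r * x * vx t x z
        - (1/2) * ((μF + (etaF t *ᵥ z)) ⬝ᵥ (SF⁻¹ *ᵥ (μF + (etaF t *ᵥ z))))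
            * (vx t x z)^2 / vxx t x z
        - (1/(2 * vxx t x z)) * (vxz t x z ⬝ᵥ (A *ᵥ vxz t x z))
        - (vx t x z / vxx t x z) * ((μF + (etaF t *ᵥ z)) ⬝ᵥ (B *ᵥ vxz t x z))
        = 0) := by
  have hγ0 : γ ≠ 0 := by linarith
  have hγ1 : (1:ℝ) - γ ≠ 0 := by linarith
  constructor
  · -- terminal condition
    intro x hx z
    have hf0 : f 0 = 0 := by rw [hf]; simp
    rw [hv, sub_self, hf0, hg0, hH0]
    simp
  · intro t ht x hx z
    set τ := T - t with hτdef
    have hτmem : τ ∈ Icc 0 T := ⟨by simp only [hτdef]; linarith [ht.2], by simp only [hτdef]; linarith [ht.1]⟩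
    have hτeq : T - τ = t := by rw [hτdef]; ring
    have hx0 : (0:ℝ) < x := hx
    set EE : (Fin N → ℝ) → ℝ :=
      fun u => Real.exp (γ * (f τ + u ⬝ᵥ g τ - 1/2 * (u ⬝ᵥ (H τ *ᵥ u)))) with hEEdef
    -- first derivative in x
    have hVx : ∀ y ∈ Ioi (0:ℝ), ∀ z', vx t y z' = y ^ (-γ) * EE z' := by
      intro y hy z'
      have hy0 : (0:ℝ) < y := hy
      have hfun : (fun s => v t s z') = fun s : ℝ => s ^ (1 - γ) / (1 - γ) * EE z' := by
        funext s; rw [hv]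
      have h1 : HasDerivAt (fun s : ℝ => s ^ (1 - γ)) ((1 - γ) * y ^ ((1 - γ) - 1)) y :=
        Real.hasDerivAt_rpow_const (Or.inl (ne_of_gt hy0))
      have hd := (h1.div_const (1 - γ)).mul_const (EE z')
      have h0 := hvx t ht y hy z'
      rw [hfun] at h0
      have := h0.unique hd
      rw [this]
      have he : (1:ℝ) - γ - 1 = -γ := by ring
      rw [he]
      field_simp
    -- second derivative in x
    have hVxx : vxx t x z = -γ * x ^ (-γ - 1) * EE z := by
      have hd : HasDerivAt (fun y : ℝ => y ^ (-γ) * EE z) (-γ * x ^ (-γ - 1) * EE z) x := by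
        have h1 : HasDerivAt (fun s : ℝ => s ^ (-γ)) (-γ * x ^ (-γ - 1)) x :=
          Real.hasDerivAt_rpow_const (Or.inl (ne_of_gt hx0))
        exact h1.mul_const (EE z)
      have heq : (fun y => vx t y z) =ᶠ[nhds x] fun y : ℝ => y ^ (-γ) * EE z := by
        filter_upwards [isOpen_Ioi.mem_nhds hx] with y hy
        exact hVx y hy z
      exact (hvxx t ht x hx z).unique (hd.congr_of_eventuallyEq heq)
    -- inner derivative in z directions
    have hinner : ∀ (z' : Fin N → ℝ) (i : Fin N),
        HasDerivAt (fun s => γ * (f τ + Function.update z' i s ⬝ᵥ g τ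
            - 1/2 * (Function.update z' i s ⬝ᵥ (H τ *ᵥ Function.update z' i s))))
          (γ * (g τ i - (H τ *ᵥ z') i)) (z' i) := by
      intro z' i
      have h1 := hasDerivAt_update_dot z' (g τ) i
      have h2 := hasDerivAt_update_quad (H τ) z' i
      rw [(hHsymm τ hτmem).eq] at h2
      have h3 := (((hasDerivAt_const (z' i) (f τ)).fun_add h1).fun_sub (h2.const_mul (1/2))).const_mul γ
      refine h3.congr_deriv ?_
      ring
    -- gradient in z
    have hVz : ∀ (z' : Fin N → ℝ) (i : Fin N),
        vz t x z' i = x ^ (1 - γ) / (1 - γ) * EE z' * (γ * (g τ i - (H τ *ᵥ z') i)) := by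
      intro z' i
      have hd := ((hinner z' i).exp).const_mul (x ^ (1 - γ) / (1 - γ))
      simp only [Function.update_eq_self] at hd
      have h0 := hvz t ht x hx z' i
      have hfun : (fun s => v t x (Function.update z' i s))
          = fun s => x ^ (1 - γ) / (1 - γ) * Real.exp (γ * (f τ + Function.update z' i s ⬝ᵥ g τ
            - 1/2 * (Function.update z' i s ⬝ᵥ (H τ *ᵥ Function.update z' i s)))) := by
        funext s; rw [hv]
      rw [hfun] at h0
      have := h0.unique hd
      rw [this, hEEdef]
      ring
    -- mixed derivative
    have hVxz : ∀ i, vxz t x z i = x ^ (-γ) * EE z * (γ * (g τ i - (H τ *ᵥ z) i)) := by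
      intro i
      have hd := ((hinner z i).exp).const_mul (x ^ (-γ))
      simp only [Function.update_eq_self] at hd
      have h0 := hvxz t ht x hx z i
      have hfun : (fun s => vx t x (Function.update z i s))
          = fun s => x ^ (-γ) * Real.exp (γ * (f τ + Function.update z i s ⬝ᵥ g τ
            - 1/2 * (Function.update z i s ⬝ᵥ (H τ *ᵥ Function.update z i s)))) := by
        funext s; rw [hVx x hx]
      rw [hfun] at h0
      have := h0.unique hd
      rw [this, hEEdef]
      ring
    -- second derivatives in z
    have hVzz : ∀ i j, vzz t x z i j = x ^ (1 - γ) / (1 - γ) * EE z *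
        (γ ^ 2 * (g τ i - (H τ *ᵥ z) i) * (g τ j - (H τ *ᵥ z) j) - γ * H τ i j) := by
      intro i j
      have hGlin : ∀ s, (H τ *ᵥ Function.update z j s) i
          = (H τ *ᵥ z) i + (s - z j) * H τ i j := by
        intro s
        rw [update_eq_add, Matrix.mulVec_add, Matrix.mulVec_smul, Matrix.mulVec_single]
        simp [smul_eq_mul]
      have hF := ((hinner z j).exp).const_mul (x ^ (1 - γ) / (1 - γ))
      simp only [Function.update_eq_self] at hF
      have hGaff : HasDerivAt
          (fun s => γ * (g τ i - (H τ *ᵥ Function.update z j s) i)) (γ * (0 - H τ i j)) (z j) := by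
        refine HasDerivAt.const_mul γ ?_
        simp only [hGlin]
        have h1 : HasDerivAt (fun s : ℝ => (H τ *ᵥ z) i + (s - z j) * H τ i j) (H τ i j) (z j) := by
          simpa using (hasDerivAt_const (z j) ((H τ *ᵥ z) i)).fun_add
            (((hasDerivAt_id (z j)).sub_const (z j)).mul_const (H τ i j))
        simpa using (hasDerivAt_const (z j) (g τ i)).fun_sub h1
      have hd := hF.fun_mul hGaff
      have h0 := hvzz t ht x hx z i j
      have hfun : (fun s => vz t x (Function.update z j s) i)
          = fun s => (x ^ (1 - γ) / (1 - γ) * Real.exp (γ * (f τ + Function.update z j s ⬝ᵥ g τ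
            - 1/2 * (Function.update z j s ⬝ᵥ (H τ *ᵥ Function.update z j s)))))
            * (γ * (g τ i - (H τ *ᵥ Function.update z j s) i)) := by
        funext s; rw [hVz (Function.update z j s) i, hEEdef]
      rw [hfun] at h0
      have := h0.unique hd
      rw [this, hEEdef]
      simp only [Function.update_eq_self]
      ring
    -- time derivative via FTC
    have hgcont : ContinuousOn g (Icc 0 T) := fun u hu => (hgderiv u hu).continuousWithinAt
    have hHcont : ContinuousOn H (Icc 0 T) := fun u hu => (hHderiv u hu).continuousWithinAt
    set c1 : ℝ := (1 - γ)/γ * (r + (μF ⬝ᵥ (SF⁻¹ *ᵥ μF))/(2*γ)) with hc1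
    set φ : ℝ → ℝ := fun u =>
        ((1/2) * (g u ⬝ᵥ (((1 - γ) • A + γ • (Cᵀ * Sig * C)) *ᵥ g u))
            + (m + (1/γ - 1) • (Bᵀ *ᵥ μF)) ⬝ᵥ g u
            - (1/2) * Matrix.trace (Cᵀ * Sig * C * H u)) with hφdef
    have hφcont : ContinuousOn φ (Icc 0 T) := by
      apply ContinuousOn.sub
      apply ContinuousOn.add
      · exact (continuous_const.mul
          ((continuous_quad (((1 - γ) • A + γ • (Cᵀ * Sig * C)))).comp continuous_id)).comp_continuousOn hgcont
      · exact (continuous_dot_const (m + (1/γ - 1) • (Bᵀ *ᵥ μF))).comp_continuousOn hgcont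
      · exact (continuous_const.mul (continuous_trace_mul (Cᵀ * Sig * C))).comp_continuousOn hHcont
    set pr : ℝ → ℝ := fun u => max 0 (min T u) with hpr
    have hprmem : ∀ u, pr u ∈ Icc 0 T := fun u =>
      ⟨le_max_left _ _, max_le (le_of_lt hT) (min_le_left _ _)⟩
    have hprcont : Continuous pr := continuous_const.max (continuous_const.min continuous_id)
    have hpr_eq : ∀ u ∈ Icc 0 T, pr u = u := fun u hu => by
      simp only [hpr]; rw [min_eq_right hu.2, max_eq_right hu.1]
    have hφtcont : Continuous (fun u => φ (pr u)) := hφcont.comp_continuous hprcont hprmem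
    have hFt : ∀ b : ℝ, HasDerivAt (fun τ' => ∫ u in (0:ℝ)..τ', φ (pr u)) (φ (pr b)) b :=
      fun b => (hφtcont.integral_hasStrictDerivAt 0 b).hasDerivAt
    have hfd : ∀ b ∈ Icc 0 T, HasDerivWithinAt f (c1 + φ b) (Icc 0 T) b := by
      intro b hb
      have h1 : HasDerivWithinAt (fun τ' => c1 * τ' + ∫ u in (0:ℝ)..τ', φ (pr u))
          (c1 + φ (pr b)) (Icc 0 T) b := by
        simpa using ((((hasDerivAt_id b).const_mul c1).fun_add (hFt b)).hasDerivWithinAt :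
          HasDerivWithinAt _ (c1 * 1 + φ (pr b)) (Icc 0 T) b)
      rw [hpr_eq b hb] at h1
      refine h1.congr ?_ ?_
      · intro y hy
        rw [hf]
        congr 1
        apply intervalIntegral.integral_congr
        intro u hu
        rw [uIcc_of_le hy.1] at hu
        simp only [hpr_eq u ⟨hu.1, le_trans hu.2 hy.2⟩]; rfl
      · rw [hf]
        congr 1
        apply intervalIntegral.integral_congr
        intro u hu
        rw [uIcc_of_le hb.1] at hu
        simp only [hpr_eq u ⟨hu.1, le_trans hu.2 hb.2⟩]; rfl
    have hgd : HasDerivWithinAt (fun u => z ⬝ᵥ g u) (z ⬝ᵥ g' τ) (Icc 0 T) τ := by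
      simp only [dotProduct]
      exact HasDerivWithinAt.fun_sum fun i _ =>
        ((hasDerivWithinAt_pi.1 (hgderiv τ hτmem)) i).const_mul (z i)
    have hHd : HasDerivWithinAt (fun u => z ⬝ᵥ (H u *ᵥ z)) (z ⬝ᵥ (H' τ *ᵥ z)) (Icc 0 T) τ := by
      simp only [dotProduct, Matrix.mulVec]
      exact HasDerivWithinAt.fun_sum fun i _ =>
        (HasDerivWithinAt.fun_sum fun j _ =>
          ((hasDerivWithinAt_pi.1 ((hasDerivWithinAt_pi.1 (hHderiv τ hτmem)) i)) j).mul_const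
            (z j)).const_mul (z i)
    have hΘ : HasDerivWithinAt (fun u => f u + z ⬝ᵥ g u - 1/2 * (z ⬝ᵥ (H u *ᵥ z)))
        ((c1 + φ τ) + z ⬝ᵥ g' τ - 1/2 * (z ⬝ᵥ (H' τ *ᵥ z))) (Icc 0 T) τ :=
      ((hfd τ hτmem).fun_add hgd).fun_sub (hHd.const_mul (1/2))
    have hneg : HasDerivWithinAt (fun s : ℝ => T - s) (-1) (Icc 0 T) t := by
      simpa using (hasDerivWithinAt_id t (Icc 0 T)).const_sub T
    have hmaps : MapsTo (fun s : ℝ => T - s) (Icc 0 T) (Icc 0 T) := by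
      intro s hs
      have h1 := hs.1; have h2 := hs.2
      exact ⟨by simp; linarith, by simp; linarith⟩
    have hcomp : HasDerivWithinAt ((fun u => f u + z ⬝ᵥ g u - 1/2 * (z ⬝ᵥ (H u *ᵥ z))) ∘
          (fun s : ℝ => T - s))
        (((c1 + φ τ) + z ⬝ᵥ g' τ - 1/2 * (z ⬝ᵥ (H' τ *ᵥ z))) * (-1)) (Icc 0 T) t := by
      apply HasDerivWithinAt.comp t _ hneg hmaps
      rw [hτdef] at hΘ
      exact hΘ
    have hθval := ((hcomp.const_mul γ).exp).const_mul (x ^ (1 - γ) / (1 - γ))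
    have hVt : vt t x z = x ^ (1 - γ) / (1 - γ) * (EE z *
        (γ * ((c1 + φ τ + z ⬝ᵥ g' τ - 1/2 * (z ⬝ᵥ (H' τ *ᵥ z))) * (-1)))) := by
      have h0 := hvt t ht x hx z
      have hfun : (fun s => v s x z) = fun s => x ^ (1 - γ) / (1 - γ) *
          Real.exp (γ * (((fun u => f u + z ⬝ᵥ g u - 1/2 * (z ⬝ᵥ (H u *ᵥ z))) ∘
            (fun s : ℝ => T - s)) s)) := by
        funext s; rw [hv]; simp only [Function.comp]
      rw [hfun] at h0
      have hu := (uniqueDiffOn_Icc hT) t ht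
      have e1 := h0.derivWithin hu
      have e2 := hθval.derivWithin hu
      rw [← e1, e2, hEEdef]
      simp only [Function.comp]; rfl
    -- symmetry facts
    have hSigsymm : Sigᵀ = Sig := by
      have h := hSig.isHermitian
      rwa [Matrix.IsHermitian, Matrix.conjTranspose_eq_transpose_of_trivial] at h
    have hSFsymm : SFᵀ = SF := by
      have h : Matrix.fromBlocks SFᵀ (SFSᵀ)ᵀ SFSᵀ SSᵀ = Matrix.fromBlocks SF SFS SFSᵀ SS := by
        rw [← Matrix.fromBlocks_transpose, ← hSigdef, hSigsymm, hSigdef]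
      have h2 := congrArg Matrix.toBlocks₁₁ h
      simpa [Matrix.toBlocks_fromBlocks₁₁] using h2
    have hSFinvsymm : (SF⁻¹)ᵀ = SF⁻¹ := by
      rw [Matrix.transpose_nonsing_inv, hSFsymm]
    have hAsymm : Aᵀ = A := by
      rw [hA]
      simp only [Matrix.transpose_sub, Matrix.transpose_add, Matrix.transpose_mul,
        Matrix.transpose_transpose, hSFinvsymm, hSFsymm]
      rw [Matrix.mul_assoc]
      abel
    have hHτsymm : (H τ)ᵀ = H τ := (hHsymm τ hτmem).eq
    -- scalar forms of the Riccati and linear ODEs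
    have hricτ := hHric τ hτmem
    rw [hL τ, hτeq] at hricτ
    have hgodeτ := hgode τ hτmem
    rw [hτeq] at hgodeτ
    have eqH := congrArg (fun X => z ⬝ᵥ (X *ᵥ z)) hricτ
    have eqg := congrArg (fun w => z ⬝ᵥ w) hgodeτ
    simp only [Matrix.add_mulVec, Matrix.sub_mulVec, Matrix.smul_mulVec,
      Matrix.zero_mulVec, dotProduct_add, dotProduct_sub, dotProduct_smul, dotProduct_zero,
      smul_eq_mul, Matrix.mul_add, Matrix.add_mul, Matrix.mul_sub, Matrix.sub_mul,
      Matrix.mul_smul, Matrix.smul_mul, Matrix.transpose_mul, Matrix.transpose_smul,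
      Matrix.transpose_add, Matrix.transpose_sub, Matrix.transpose_transpose,
      Matrix.mulVec_add, Matrix.mulVec_sub, Matrix.mulVec_smul, Matrix.mulVec_mulVec,
      hHτsymm, hAsymm, hSFinvsymm, hSigsymm, Matrix.mul_assoc] at eqH eqg
    -- substitute derivative formulas into the goal
    have hVxval : vx t x z = x ^ (-γ) * EE z := hVx x hx z
    have hVzfun : vz t x z = (γ * (x ^ (1 - γ) / (1 - γ) * EE z)) • (g τ - H τ *ᵥ z) := by
      funext i
      rw [hVz z i]
      simp only [Pi.smul_apply, Pi.sub_apply, smul_eq_mul]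
      ring
    have hVxzfun : vxz t x z = (γ * (x ^ (-γ) * EE z)) • (g τ - H τ *ᵥ z) := by
      funext i
      rw [hVxz i]
      simp only [Pi.smul_apply, Pi.sub_apply, smul_eq_mul]
      ring
    have hVzzfun : vzz t x z = (x ^ (1 - γ) / (1 - γ) * EE z) •
        (γ ^ 2 • Matrix.vecMulVec (g τ - H τ *ᵥ z) (g τ - H τ *ᵥ z) - γ • H τ) := by
      funext i j
      rw [hVzz i j]
      simp only [Matrix.smul_apply, Matrix.sub_apply, Matrix.vecMulVec_apply,
        Pi.sub_apply, smul_eq_mul]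
      ring
    rw [hVt, hVxval, hVxx, hVzfun, hVxzfun, hVzzfun]
    have hxE : x ^ ((1:ℝ) - γ) = x ^ (-γ) * x := by
      rw [show (1:ℝ) - γ = -γ + 1 by ring, Real.rpow_add hx0, Real.rpow_one]
    have hxm : x ^ (-γ - 1) = x ^ (-γ) / x := by
      rw [show -γ - 1 = -γ - 1 from rfl, Real.rpow_sub hx0, Real.rpow_one]
    rw [hxE, hxm]
    simp only [Matrix.mul_smul, Matrix.mul_sub, Matrix.trace_smul, Matrix.trace_sub,
      trace_mul_vecMulVec, smul_eq_mul, dotProduct_smul, smul_dotProduct,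
      Matrix.mulVec_smul, Matrix.mulVec_sub, Matrix.mulVec_add, dotProduct_add,
      dotProduct_sub, add_dotProduct, sub_dotProduct, Matrix.mulVec_mulVec,
      dot_mulVec_left, Matrix.transpose_mul, Matrix.transpose_transpose,
      hHτsymm, hAsymm, hSFinvsymm, hSigsymm, Matrix.mul_assoc]
    -- orientation conversions
    have dflip : ∀ {k l : ℕ} (a : Fin k → ℝ) (X : Matrix (Fin k) (Fin l) ℝ) (b : Fin l → ℝ),
        a ⬝ᵥ (X *ᵥ b) = b ⬝ᵥ (Xᵀ *ᵥ a) := by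
      intro k l a X b
      rw [dotProduct_comm, dot_mulVec_left]
    have c_q1 : z ⬝ᵥ (H τ * (Cᵀ * eta t)) *ᵥ z = z ⬝ᵥ ((eta t)ᵀ * (C * H τ)) *ᵥ z := by
      rw [dflip]
      simp only [Matrix.transpose_mul, Matrix.transpose_transpose, hHτsymm, Matrix.mul_assoc]
    have c_q2 : z ⬝ᵥ (H τ * (Bᵀ * etaF t)) *ᵥ z = z ⬝ᵥ ((etaF t)ᵀ * (B * H τ)) *ᵥ z := by
      rw [dflip]
      simp only [Matrix.transpose_mul, Matrix.transpose_transpose, hHτsymm, Matrix.mul_assoc]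
    rw [c_q1, c_q2] at eqH
    have c_K : g τ ⬝ᵥ (Cᵀ * (Sig * (C * H τ))) *ᵥ z = z ⬝ᵥ (H τ * (Cᵀ * (Sig * C))) *ᵥ g τ := by
      rw [dflip]
      simp only [Matrix.transpose_mul, Matrix.transpose_transpose, hHτsymm, hSigsymm,
        Matrix.mul_assoc]
    have c_A1 : g τ ⬝ᵥ (A * H τ) *ᵥ z = z ⬝ᵥ (H τ * A) *ᵥ g τ := by
      rw [dflip]
      simp only [Matrix.transpose_mul, hHτsymm, hAsymm]
    have c_m : m ⬝ᵥ H τ *ᵥ z = z ⬝ᵥ H τ *ᵥ m := by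
      rw [dflip, hHτsymm]
    have c_μ1 : μF ⬝ᵥ (SF⁻¹ * etaF t) *ᵥ z = z ⬝ᵥ ((etaF t)ᵀ * SF⁻¹) *ᵥ μF := by
      rw [dflip]
      simp only [Matrix.transpose_mul, hSFinvsymm]
    have c_μ2 : μF ⬝ᵥ (B * H τ) *ᵥ z = z ⬝ᵥ (H τ * Bᵀ) *ᵥ μF := by
      rw [dflip]
      simp only [Matrix.transpose_mul, hHτsymm]
    -- trace of the rank-one part
    have htr : (Cᵀ * (Sig * (C * Matrix.vecMulVec (g τ - H τ *ᵥ z) (g τ - H τ *ᵥ z)))).trace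
        = (g τ - H τ *ᵥ z) ⬝ᵥ ((Cᵀ * (Sig * C)) *ᵥ (g τ - H τ *ᵥ z)) := by
      rw [show Cᵀ * (Sig * (C * Matrix.vecMulVec (g τ - H τ *ᵥ z) (g τ - H τ *ᵥ z)))
          = Cᵀ * (Sig * C) * Matrix.vecMulVec (g τ - H τ *ᵥ z) (g τ - H τ *ᵥ z) by
        rw [Matrix.mul_assoc, Matrix.mul_assoc]]
      rw [trace_mul_vecMulVec]
    rw [htr, hc1, hφdef]
    simp only [Matrix.mulVec_add, Matrix.mulVec_sub, Matrix.mulVec_smul, Matrix.mulVec_mulVec,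
      Matrix.add_mulVec, Matrix.sub_mulVec, Matrix.smul_mulVec,
      dotProduct_add, dotProduct_sub, dotProduct_smul, add_dotProduct, sub_dotProduct,
      smul_eq_mul, dot_mulVec_left, Matrix.transpose_mul, Matrix.transpose_transpose,
      hHτsymm, hAsymm, hSFinvsymm, hSigsymm, Matrix.mul_assoc]
    have c_μ3 : ((1/γ - 1) • (Bᵀ *ᵥ μF)) ⬝ᵥ g τ = (1/γ - 1) * (μF ⬝ᵥ B *ᵥ g τ) := by
      rw [smul_dotProduct, dot_mulVec_left, Matrix.transpose_transpose, smul_eq_mul]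
    rw [c_K, c_A1, c_m, c_μ1, c_μ2, c_μ3]
    have hEne : EE z ≠ 0 := by rw [hEEdef]; exact (Real.exp_pos _).ne'
    have hXne : x ^ (-γ) ≠ 0 := (Real.rpow_pos_of_pos hx0 (-γ)).ne'
    have hxne : x ≠ 0 := ne_of_gt hx0
    linear_combination (norm := (field_simp; ring))
      (x ^ (-γ) * x * EE z * γ/(2*(1-γ))) * eqH - (x ^ (-γ) * x * EE z * γ/(1-γ)) * eqg
end
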